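/- arXiv:math/0411211 — 13 statements merged into one kernel-verified Lean document; each statement's English description precedes it below -/
import Mathlib

section
/- Let n ≥ 1 and let L : ℝ × ℝⁿ × ℝⁿ → ℝ, written L(t,x,v), be continuously differentiable. Let h_t : ℝ × ℝ × ℝⁿ → ℝ and h_x : ℝ × ℝ × ℝⁿ → ℝⁿ be C² maps forming a local one-parameter group of transformations: h_t(0,t,x) = t, h_x(0,t,x) = x, and for all s, ∂h_t/∂s(s,t,x) = T(h_t(s,t,x), h_x(s,t,x)) and ∂h_x/∂s(s,t,x) = X(h_t(s,t,x), h_x(s,t,x)), where T(t,x) = ∂h_t/∂s(0,t,x) and X(t,x) = ∂h_x/∂s(0,t,x) are the (C¹) infinitesimal generators. Then the following are equivalent. (i) Invariance: for every C¹ curve x : [a,b] → ℝⁿ, every subinterval [α,β] ⊆ [a,b], and every s in a neighborhood of 0 small enough that θ_s(t) := h_t(s,t,x(t)) has strictly positive derivative on [α,β], the transformed curve x^s := (t ↦ h_x(s,t,x(t))) ∘ θ_s⁻¹ satisfies ∫_{θ_s(α)}^{θ_s(β)} L(τ, x^s(τ), (x^s)'(τ)) dτ = ∫_α^β L(t, x(t),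 x'(t)) dt. (ii) For all (t,x,v) ∈ ℝ × ℝⁿ × ℝⁿ: ∂L/∂t(t,x,v)·T(t,x) + ∇_x L(t,x,v)·X(t,x) + ∇_v L(t,x,v)·(∂X/∂t(t,x) + D_x X(t,x)·v − v·(∂T/∂t(t,x) + ∇_x T(t,x)·v)) + L(t,x,v)·(∂T/∂t(t,x) + ∇_x T(t,x)·v) = 0, where D_x X denotes the Jacobian matrix of X with respect to x. -/
open Set Filter Metric intervalIntegral MeasureTheory
open scoped Topology

set_option linter.unusedSectionVars false
set_option maxHeartbeats 1000000

namespace Stmt1Aux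

variable {n : ℕ}

noncomputable def cur {F : Type*} (H : ℝ × ℝ × (Fin n → ℝ) → F)
    (x : ℝ → Fin n → ℝ) (s t : ℝ) : F := H (s, t, x t)

noncomputable def pd {F : Type*} [NormedAddCommGroup F] [NormedSpace ℝ F]
    (H : ℝ × ℝ × (Fin n → ℝ) → F) (x : ℝ → Fin n → ℝ) (s t : ℝ) : F :=
  fderiv ℝ H (s, t, x t) (0, 1, deriv x t)

variable {F : Type*} [NormedAddCommGroup F] [NormedSpace ℝ F]
variable {H : ℝ × ℝ × (Fin n → ℝ) → F} {x : ℝ → Fin n → ℝ}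

section generic

variable (hH : ContDiff ℝ 2 H) (hx : ContDiff ℝ 1 x)
include hx

lemma inner_hasDerivAt (s t : ℝ) :
    HasDerivAt (fun u => ((s : ℝ), u, x u)) ((0 : ℝ), (1 : ℝ), deriv x t) t :=
  (hasDerivAt_const t s).prodMk ((hasDerivAt_id t).prodMk
    ((hx.differentiable one_ne_zero t).hasDerivAt))

include hH

/-- t-derivative of the transformed curve. -/
lemma cur_hasDerivAt_t (s t : ℝ) :
    HasDerivAt (fun u => cur H x s u) (pd H x s t) t :=
  ((hH.differentiable two_ne_zero (s, t, x t)).hasFDerivAt).comp_hasDerivAt t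
    (inner_hasDerivAt hx s t)

lemma deriv_cur_t (s t : ℝ) : deriv (fun u => H (s, u, x u)) t = pd H x s t :=
  (cur_hasDerivAt_t hH hx s t).deriv

/-- s-derivative of the transformed curve. -/
lemma cur_hasDerivAt_s (s t : ℝ) :
    HasDerivAt (fun σ => cur H x σ t) (fderiv ℝ H (s, t, x t) (1, 0, 0)) s := by
  have h1 : HasDerivAt (fun σ => (σ, t, x t)) ((1 : ℝ), (0 : ℝ), (0 : Fin n → ℝ)) s :=
    (hasDerivAt_id s).prodMk ((hasDerivAt_const s t).prodMk (hasDerivAt_const s (x t)))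
  exact ((hH.differentiable two_ne_zero (s, t, x t)).hasFDerivAt).comp_hasDerivAt s h1

/-- continuity of `pd` jointly in `(s,t)`. -/
lemma pd_continuous : Continuous (fun st : ℝ × ℝ => pd H x st.1 st.2) := by
  have h1 : Continuous (fun st : ℝ × ℝ => fderiv ℝ H (st.1, st.2, x st.2)) :=
    (hH.continuous_fderiv two_ne_zero).comp
      (continuous_fst.prodMk (continuous_snd.prodMk (hx.continuous.comp continuous_snd)))
  have h2 : Continuous (fun st : ℝ × ℝ => ((0 : ℝ), (1 : ℝ), deriv x st.2)) :=
    continuous_const.prodMk (continuous_const.prodMk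
      ((hx.continuous_deriv le_rfl).comp continuous_snd))
  exact h1.clm_apply h2

lemma cur_continuous : Continuous (fun st : ℝ × ℝ => cur H x st.1 st.2) :=
  hH.continuous.comp
    (continuous_fst.prodMk (continuous_snd.prodMk (hx.continuous.comp continuous_snd)))

/-- Clairaut-type lemma: s-derivative of `pd`. -/
lemma pd_hasDerivAt_s (s t : ℝ) :
    HasDerivAt (fun σ => pd H x σ t)
      ((fderiv ℝ (fderiv ℝ H) (s, t, x t) ((0 : ℝ), (1 : ℝ), deriv x t)) (1, 0, 0)) s := by
  have hF : ContDiff ℝ 1 (fderiv ℝ H) := hH.fderiv_right (le_refl 2)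
  have h1 : HasDerivAt (fun σ => (σ, t, x t)) ((1 : ℝ), (0 : ℝ), (0 : Fin n → ℝ)) s :=
    (hasDerivAt_id s).prodMk ((hasDerivAt_const s t).prodMk (hasDerivAt_const s (x t)))
  have h2 : HasDerivAt (fun σ => fderiv ℝ H (σ, t, x t))
      (fderiv ℝ (fderiv ℝ H) (s, t, x t) (1, 0, 0)) s :=
    ((hF.differentiable one_ne_zero (s, t, x t)).hasFDerivAt).comp_hasDerivAt s h1
  have h3 := h2.clm_apply (hasDerivAt_const s ((0 : ℝ), (1 : ℝ), deriv x t))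
  have hsymm := second_derivative_symmetric (f := H) (f' := fderiv ℝ H)
      (f'' := fderiv ℝ (fderiv ℝ H) (s, t, x t))
      (fun y => (hH.differentiable two_ne_zero y).hasFDerivAt)
      ((hF.differentiable one_ne_zero (s, t, x t)).hasFDerivAt)
      ((1 : ℝ), (0 : ℝ), (0 : Fin n → ℝ)) ((0 : ℝ), (1 : ℝ), deriv x t)
  simp only [map_zero, add_zero] at h3
  rw [← hsymm]
  exact h3

end generic

section flow

variable {Ht : ℝ × ℝ × (Fin n → ℝ) → ℝ} {Hx : ℝ × ℝ × (Fin n → ℝ) → (Fin n → ℝ)}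
variable {V : ℝ × (Fin n → ℝ) → F}

/-- the flow identity transported to the curve. -/
lemma flow_identity (hH : ContDiff ℝ 2 H) (hx : ContDiff ℝ 1 x)
    (hflow : ∀ (s t : ℝ) (y : Fin n → ℝ),
      deriv (fun s' => H (s', t, y)) s = V (Ht (s, t, y), Hx (s, t, y)))
    (s u : ℝ) :
    fderiv ℝ H (s, u, x u) ((1 : ℝ), (0 : ℝ), (0 : Fin n → ℝ))
      = V (cur Ht x s u, cur Hx x s u) := by
  have h := (cur_hasDerivAt_s hH hx s u).deriv
  rw [show (fun σ => cur H x σ u) = fun s' => H (s', u, x u) from rfl, hflow s u (x u)] at h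
  exact h.symm

/-- s-derivative of `pd H` via the flow equation: the heart of the computation. -/
lemma pd_hasDerivAt_s_flow (hHt : ContDiff ℝ 2 Ht) (hHx : ContDiff ℝ 2 Hx)
    (hH : ContDiff ℝ 2 H) (hV : ContDiff ℝ 1 V) (hx : ContDiff ℝ 1 x)
    (hflow : ∀ (s t : ℝ) (y : Fin n → ℝ),
      deriv (fun s' => H (s', t, y)) s = V (Ht (s, t, y), Hx (s, t, y)))
    (s t : ℝ) :
    HasDerivAt (fun σ => pd H x σ t)
      (fderiv ℝ V (cur Ht x s t, cur Hx x s t) (pd Ht x s t, pd Hx x s t)) s := by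
  have hF : ContDiff ℝ 1 (fderiv ℝ H) := hH.fderiv_right (le_refl 2)
  -- t-derivative of `u ↦ fderiv H (s,u,x u) (1,0,0)`
  have h2 : HasDerivAt (fun u => fderiv ℝ H (s, u, x u))
      (fderiv ℝ (fderiv ℝ H) (s, t, x t) ((0 : ℝ), (1 : ℝ), deriv x t)) t :=
    ((hF.differentiable one_ne_zero (s, t, x t)).hasFDerivAt).comp_hasDerivAt t
      (inner_hasDerivAt hx s t)
  have h3 := h2.clm_apply (hasDerivAt_const t ((1 : ℝ), (0 : ℝ), (0 : Fin n → ℝ)))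
  simp only [map_zero, add_zero] at h3
  -- the same function is `u ↦ V (cur Ht x s u, cur Hx x s u)`, whose derivative we compute
  have h4 : HasDerivAt (fun u => V (cur Ht x s u, cur Hx x s u))
      (fderiv ℝ V (cur Ht x s t, cur Hx x s t) (pd Ht x s t, pd Hx x s t)) t :=
    ((hV.differentiable one_ne_zero _).hasFDerivAt).comp_hasDerivAt t
      ((cur_hasDerivAt_t hHt hx s t).prodMk (cur_hasDerivAt_t hHx hx s t))
  have h5 : HasDerivAt (fun u => fderiv ℝ H (s, u, x u) ((1 : ℝ), (0 : ℝ), (0 : Fin n → ℝ)))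
      (fderiv ℝ V (cur Ht x s t, cur Hx x s t) (pd Ht x s t, pd Hx x s t)) t := by
    refine h4.congr_of_eventuallyEq (Eventually.of_forall fun u => ?_)
    exact flow_identity hH hx hflow s u
  have h6 := h3.unique h5
  have h7 := pd_hasDerivAt_s hH hx s t
  rw [h6] at h7
  exact h7

end flow

section main

variable {L : ℝ × (Fin n → ℝ) × (Fin n → ℝ) → ℝ}
variable {Ht : ℝ × ℝ × (Fin n → ℝ) → ℝ} {Hx : ℝ × ℝ × (Fin n → ℝ) → (Fin n → ℝ)}
variable {T : ℝ × (Fin n → ℝ) → ℝ} {X : ℝ × (Fin n → ℝ) → (Fin n → ℝ)}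

/-- slope of the transformed curve -/
noncomputable def ws (Ht : ℝ × ℝ × (Fin n → ℝ) → ℝ) (Hx : ℝ × ℝ × (Fin n → ℝ) → (Fin n → ℝ))
    (x : ℝ → Fin n → ℝ) (s t : ℝ) : Fin n → ℝ :=
  (pd Ht x s t)⁻¹ • pd Hx x s t

/-- pulled-back integrand -/
noncomputable def GG (L : ℝ × (Fin n → ℝ) × (Fin n → ℝ) → ℝ)
    (Ht : ℝ × ℝ × (Fin n → ℝ) → ℝ) (Hx : ℝ × ℝ × (Fin n → ℝ) → (Fin n → ℝ))
    (x : ℝ → Fin n → ℝ) (s t : ℝ) : ℝ :=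
  L (cur Ht x s t, cur Hx x s t, ws Ht Hx x s t) * pd Ht x s t

/-- the invariance identity expression -/
noncomputable def Z (L : ℝ × (Fin n → ℝ) × (Fin n → ℝ) → ℝ)
    (T : ℝ × (Fin n → ℝ) → ℝ) (X : ℝ × (Fin n → ℝ) → (Fin n → ℝ))
    (t : ℝ) (y v : Fin n → ℝ) : ℝ :=
  fderiv ℝ L (t, y, v) (1, 0, 0) * T (t, y)
    + fderiv ℝ L (t, y, v) (0, X (t, y), 0)
    + fderiv ℝ L (t, y, v) (0, 0, fderiv ℝ X (t, y) (1, v) - fderiv ℝ T (t, y) (1, v) • v)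
    + L (t, y, v) * fderiv ℝ T (t, y) (1, v)

variable (hL : ContDiff ℝ 1 L) (hHt : ContDiff ℝ 2 Ht) (hHx : ContDiff ℝ 2 Hx)
  (hT : ContDiff ℝ 1 T) (hX : ContDiff ℝ 1 X) (hx : ContDiff ℝ 1 x)
  (hHts : ∀ (s t : ℝ) (y : Fin n → ℝ),
      deriv (fun s' => Ht (s', t, y)) s = T (Ht (s, t, y), Hx (s, t, y)))
  (hHxs : ∀ (s t : ℝ) (y : Fin n → ℝ),
      deriv (fun s' => Hx (s', t, y)) s = X (Ht (s, t, y), Hx (s, t, y)))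

include hL hHt hHx hT hX hx hHts hHxs in
/-- Master computation: the s-derivative of the pulled-back integrand. -/
lemma GG_hasDerivAt_s (s t : ℝ) (hp : pd Ht x s t ≠ 0) :
    HasDerivAt (fun σ => GG L Ht Hx x σ t)
      (pd Ht x s t * Z L T X (cur Ht x s t) (cur Hx x s t) (ws Ht Hx x s t)) s := by
  set θ := cur Ht x s t with hθ
  set ψ := cur Hx x s t with hψ
  set p := pd Ht x s t with hpdef
  set q := pd Hx x s t with hqdef
  set w : Fin n → ℝ := ws Ht Hx x s t with hwdef
  have hqw : p • w = q := by
    rw [hwdef]; show p • ((p)⁻¹ • q) = q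
    rw [smul_smul, mul_inv_cancel₀ hp, one_smul]
  have hpq : ((p : ℝ), q) = p • (((1 : ℝ), w) : ℝ × (Fin n → ℝ)) := by
    rw [Prod.smul_def]; simp [hqw]
  set c : ℝ := fderiv ℝ T (θ, ψ) (1, w) with hc
  set Xv : Fin n → ℝ := fderiv ℝ X (θ, ψ) (1, w) with hXv
  -- derivative of p
  have hpdot : HasDerivAt (fun σ => pd Ht x σ t) (p * c) s := by
    have h := pd_hasDerivAt_s_flow hHt hHx hHt hT hx hHts s t
    rw [← hθ, ← hψ, ← hpdef, ← hqdef, hpq] at h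
    rwa [ContinuousLinearMap.map_smul, smul_eq_mul, ← hc] at h
  -- derivative of q
  have hqdot : HasDerivAt (fun σ => pd Hx x σ t) (p • Xv) s := by
    have h := pd_hasDerivAt_s_flow hHt hHx hHx hX hx hHxs s t
    rw [← hθ, ← hψ, ← hpdef, ← hqdef, hpq] at h
    rwa [ContinuousLinearMap.map_smul, ← hXv] at h
  -- derivative of θ
  have hθdot : HasDerivAt (fun σ => cur Ht x σ t) (T (θ, ψ)) s := by
    have h := cur_hasDerivAt_s hHt hx s t
    rwa [flow_identity hHt hx hHts s t, ← hθ, ← hψ] at h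
  -- derivative of ψ
  have hψdot : HasDerivAt (fun σ => cur Hx x σ t) (X (θ, ψ)) s := by
    have h := cur_hasDerivAt_s hHx hx s t
    rwa [flow_identity hHx hx hHxs s t, ← hθ, ← hψ] at h
  -- derivative of w
  have hwdot : HasDerivAt (fun σ => ws Ht Hx x σ t) (Xv - c • w) s := by
    have h := (hpdot.inv hp).smul hqdot
    rw [← hpdef, ← hqdef] at h
    simp only [Pi.inv_apply, ← hpdef] at h
    have e1 : p⁻¹ • p • Xv + (-(p * c) / p ^ 2) • q = Xv - c • w := by
      rw [← hqw, smul_smul, smul_smul]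
      have e2 : -(p * c) / p ^ 2 * p = -c := by field_simp
      have e3 : p⁻¹ * p = 1 := inv_mul_cancel₀ hp
      rw [e2, e3, one_smul, neg_smul, sub_eq_add_neg]
    rwa [e1] at h
  -- derivative of L along the flow
  have hLdot : HasDerivAt (fun σ => L (cur Ht x σ t, cur Hx x σ t, ws Ht Hx x σ t))
      (fderiv ℝ L (θ, ψ, w) (T (θ, ψ), X (θ, ψ), Xv - c • w)) s :=
    ((hL.differentiable one_ne_zero (θ, ψ, w)).hasFDerivAt).comp_hasDerivAt s
      (hθdot.prodMk (hψdot.prodMk hwdot))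
  have hGdot := hLdot.mul hpdot
  have key : fderiv ℝ L (θ, ψ, w) (T (θ, ψ), X (θ, ψ), Xv - c • w) * p
      + L (θ, ψ, w) * (p * c) = p * Z L T X θ ψ w := by
    have hdec : ((T (θ, ψ) : ℝ), X (θ, ψ), Xv - c • w)
        = T (θ, ψ) • (((1 : ℝ), (0 : Fin n → ℝ), (0 : Fin n → ℝ)) : ℝ × (Fin n → ℝ) × (Fin n → ℝ))
          + (((0 : ℝ), X (θ, ψ), (0 : Fin n → ℝ)) : ℝ × (Fin n → ℝ) × (Fin n → ℝ))
          + (((0 : ℝ), (0 : Fin n → ℝ), Xv - c • w) : ℝ × (Fin n → ℝ) × (Fin n → ℝ)) := by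
      simp [Prod.ext_iff]
    rw [hdec, map_add, map_add, ContinuousLinearMap.map_smul, smul_eq_mul]
    unfold Z
    rw [← hc, ← hXv]
    ring
  rwa [key] at hGdot

include hHt hx in
lemma pd_Ht_zero (hHt0 : ∀ (t : ℝ) (y : Fin n → ℝ), Ht (0, t, y) = t) (t : ℝ) :
    pd Ht x 0 t = 1 := by
  have h := cur_hasDerivAt_t hHt hx 0 t
  have he : (fun u => cur Ht x 0 u) = fun u => u := by
    funext u; exact hHt0 u (x u)
  rw [he] at h
  exact h.unique (hasDerivAt_id t)

include hHx hx in
lemma pd_Hx_zero (hHx0 : ∀ (t : ℝ) (y : Fin n → ℝ), Hx (0, t, y) = y) (t : ℝ) :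
    pd Hx x 0 t = deriv x t := by
  have h := cur_hasDerivAt_t hHx hx 0 t
  have he : (fun u => cur Hx x 0 u) = fun u => x u := by
    funext u; exact hHx0 u (x u)
  rw [he] at h
  exact h.unique (hx.differentiable one_ne_zero t).hasDerivAt

include hHt hHx hx in
lemma GG_zero (hHt0 : ∀ (t : ℝ) (y : Fin n → ℝ), Ht (0, t, y) = t)
    (hHx0 : ∀ (t : ℝ) (y : Fin n → ℝ), Hx (0, t, y) = y) (t : ℝ) :
    GG L Ht Hx x 0 t = L (t, x t, deriv x t) := by
  unfold GG ws cur
  rw [pd_Ht_zero hHt hx hHt0 t, pd_Hx_zero hHx hx hHx0 t, hHt0 t (x t), hHx0 t (x t)]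
  simp

include hHt hx in
lemma pos_tube (hHt0 : ∀ (t : ℝ) (y : Fin n → ℝ), Ht (0, t, y) = t) (α β : ℝ) :
    ∃ ε > (0 : ℝ), ∀ σ u : ℝ, |σ| < ε → u ∈ Icc α β → 0 < pd Ht x σ u := by
  have hU : IsOpen {st : ℝ × ℝ | 0 < pd Ht x st.1 st.2} :=
    isOpen_lt continuous_const (pd_continuous hHt hx)
  have hK : IsCompact (({0} : Set ℝ) ×ˢ Icc α β) :=
    isCompact_singleton.prod isCompact_Icc
  have hKU : (({0} : Set ℝ) ×ˢ Icc α β) ⊆ {st : ℝ × ℝ | 0 < pd Ht x st.1 st.2} := by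
    rintro ⟨σ, u⟩ ⟨hσ, _⟩
    simp only [mem_singleton_iff] at hσ
    subst hσ
    simp only [mem_setOf_eq]
    rw [pd_Ht_zero hHt hx hHt0 u]; norm_num
  obtain ⟨δ, hδpos, hδ⟩ := hK.exists_thickening_subset_open hU hKU
  refine ⟨δ, hδpos, fun σ u hσ hu => ?_⟩
  have : (σ, u) ∈ Metric.thickening δ (({0} : Set ℝ) ×ˢ Icc α β) := by
    rw [Metric.mem_thickening_iff]
    refine ⟨(0, u), ⟨rfl, hu⟩, ?_⟩
    rw [Prod.dist_eq]
    simp [Real.dist_eq, abs_of_nonneg, hσ]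
  exact hδ this

include hL hHt hHx hT hX hx hHts hHxs in
lemma GG_const (hZ : ∀ (t : ℝ) (y v : Fin n → ℝ), Z L T X t y v = 0)
    {ε α β : ℝ} (hε : ∀ σ u : ℝ, |σ| < ε → u ∈ Icc α β → 0 < pd Ht x σ u)
    {s : ℝ} (hs : |s| < ε) {t : ℝ} (ht : t ∈ Icc α β) :
    GG L Ht Hx x s t = GG L Ht Hx x 0 t := by
  have key : ∀ σ : ℝ, |σ| ≤ |s| → HasDerivAt (fun σ' => GG L Ht Hx x σ' t) 0 σ := by
    intro σ hσ
    have hp : 0 < pd Ht x σ t := hε σ t (lt_of_le_of_lt hσ hs) ht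
    have h := GG_hasDerivAt_s hL hHt hHx hT hX hx hHts hHxs σ t (ne_of_gt hp)
    rwa [hZ, mul_zero] at h
  rcases le_total 0 s with h0s | hs0
  · have := constant_of_has_deriv_right_zero (f := fun σ' => GG L Ht Hx x σ' t) (a := 0) (b := s)
      (fun σ hσ => ((key σ (by rw [abs_of_nonneg hσ.1, abs_of_nonneg h0s]; exact hσ.2)).continuousAt).continuousWithinAt)
      (fun σ hσ => ((key σ (by rw [abs_of_nonneg hσ.1, abs_of_nonneg h0s]; exact hσ.2.le)).hasDerivWithinAt))
    exact this s (right_mem_Icc.mpr h0s)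
  · have := constant_of_has_deriv_right_zero (f := fun σ' => GG L Ht Hx x σ' t) (a := s) (b := 0)
      (fun σ hσ => ((key σ (by rw [abs_of_nonpos (hσ.2), abs_of_nonpos hs0]; exact neg_le_neg hσ.1)).continuousAt).continuousWithinAt)
      (fun σ hσ => ((key σ (by rw [abs_of_nonpos hσ.2.le, abs_of_nonpos hs0]; exact neg_le_neg hσ.1)).hasDerivWithinAt))
    exact (this 0 (right_mem_Icc.mpr hs0)).symm

include hL hT hX in
lemma Z_continuous :
    Continuous (fun pt : ℝ × (Fin n → ℝ) × (Fin n → ℝ) => Z L T X pt.1 pt.2.1 pt.2.2) := by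
  have hy : Continuous (fun pt : ℝ × (Fin n → ℝ) × (Fin n → ℝ) => (pt.1, pt.2.1)) :=
    continuous_fst.prodMk (continuous_fst.comp continuous_snd)
  have hv : Continuous (fun pt : ℝ × (Fin n → ℝ) × (Fin n → ℝ) => pt.2.2) :=
    continuous_snd.comp continuous_snd
  have hdL : Continuous (fun pt : ℝ × (Fin n → ℝ) × (Fin n → ℝ) =>
      fderiv ℝ L (pt.1, pt.2.1, pt.2.2)) :=
    (hL.continuous_fderiv one_ne_zero).comp
      (continuous_fst.prodMk ((continuous_fst.comp continuous_snd).prodMk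
        (continuous_snd.comp continuous_snd)))
  have hdT : Continuous (fun pt : ℝ × (Fin n → ℝ) × (Fin n → ℝ) =>
      fderiv ℝ T (pt.1, pt.2.1) ((1 : ℝ), pt.2.2)) :=
    ((hT.continuous_fderiv one_ne_zero).comp hy).clm_apply (continuous_const.prodMk hv)
  have hdX : Continuous (fun pt : ℝ × (Fin n → ℝ) × (Fin n → ℝ) =>
      fderiv ℝ X (pt.1, pt.2.1) ((1 : ℝ), pt.2.2)) :=
    ((hX.continuous_fderiv one_ne_zero).comp hy).clm_apply (continuous_const.prodMk hv)
  unfold Z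
  exact ((((hdL.clm_apply continuous_const).mul (hT.continuous.comp hy)).add
    (hdL.clm_apply (continuous_const.prodMk ((hX.continuous.comp hy).prodMk continuous_const)))).add
    (hdL.clm_apply (continuous_const.prodMk (continuous_const.prodMk (hdX.sub (hdT.smul hv)))))).add
    (hL.continuous.mul hdT)

include hL hHt hHx hx in
/-- local representation of any curve `xs` matching the transformed curve. -/
lemma local_rep {s α β : ℝ}
    (hpos : ∀ u ∈ Icc α β, 0 < pd Ht x s u)
    {xs : ℝ → Fin n → ℝ}
    (hxs : ∀ u ∈ Icc α β, xs (Ht (s, u, x u)) = Hx (s, u, x u))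
    {t₁ : ℝ} (ht₁ : t₁ ∈ Ioo α β) :
    HasDerivAt xs (ws Ht Hx x s t₁) (cur Ht x s t₁) ∧
      ContinuousAt (fun τ => L (τ, xs τ, deriv xs τ)) (cur Ht x s t₁) := by
  set θ : ℝ → ℝ := fun u => cur Ht x s u with hθdef
  have h1 : ∀ u, HasDerivAt θ (pd Ht x s u) u := fun u => cur_hasDerivAt_t hHt hx s u
  have hθC1 : ContDiff ℝ 1 θ :=
    (hHt.of_le one_le_two).comp (contDiff_const.prodMk (contDiff_id.prodMk hx))
  have hp1 : pd Ht x s t₁ ≠ 0 := ne_of_gt (hpos t₁ (Ioo_subset_Icc_self ht₁))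
  have hstrict : HasStrictDerivAt θ (pd Ht x s t₁) t₁ := by
    have := (hθC1.contDiffAt (x := t₁)).hasStrictDerivAt one_ne_zero
    rwa [(h1 t₁).deriv] at this
  have hF := hstrict.hasStrictFDerivAt_equiv hp1
  set e := HasStrictFDerivAt.toOpenPartialHomeomorph θ hF with hedef
  have hecoe : (e : ℝ → ℝ) = θ := rfl
  have hsrc : t₁ ∈ e.source := hF.mem_toOpenPartialHomeomorph_source
  have htgt : θ t₁ ∈ e.target := hF.image_mem_toOpenPartialHomeomorph_target
  set U : Set ℝ := e.target ∩ e.symm ⁻¹' (Ioo α β ∩ e.source) with hUdef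
  have hUopen : IsOpen U :=
    e.continuousOn_symm.isOpen_inter_preimage e.open_target (isOpen_Ioo.inter e.open_source)
  have hsymm_t₁ : e.symm (θ t₁) = t₁ := by
    have := e.left_inv hsrc
    rwa [hecoe] at this
  have hτU : θ t₁ ∈ U := by
    refine ⟨htgt, ?_⟩
    rw [mem_preimage, hsymm_t₁]
    exact ⟨ht₁, hsrc⟩
  have hUprop : ∀ y ∈ U, e.symm y ∈ Ioo α β ∧ θ (e.symm y) = y := by
    intro y hy
    refine ⟨hy.2.1, ?_⟩
    have := e.right_inv hy.1
    rwa [hecoe] at this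
  have hxs_on : ∀ y ∈ U, xs y = cur Hx x s (e.symm y) := by
    intro y hy
    obtain ⟨hu, hθu⟩ := hUprop y hy
    have h2 : xs (θ (e.symm y)) = cur Hx x s (e.symm y) :=
      hxs (e.symm y) (Ioo_subset_Icc_self hu)
    rwa [hθu] at h2
  have hder : ∀ y ∈ U, HasDerivAt xs (ws Ht Hx x s (e.symm y)) y := by
    intro y hy
    obtain ⟨hu, hθu⟩ := hUprop y hy
    have hpu : pd Ht x s (e.symm y) ≠ 0 := ne_of_gt (hpos _ (Ioo_subset_Icc_self hu))
    have hJcont : ContinuousAt e.symm y :=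
      e.continuousOn_symm.continuousAt (e.open_target.mem_nhds hy.1)
    have hJ : HasDerivAt e.symm (pd Ht x s (e.symm y))⁻¹ y := by
      refine HasDerivAt.of_local_left_inverse hJcont (h1 (e.symm y)) hpu ?_
      filter_upwards [hUopen.mem_nhds hy] with z hz
      exact (hUprop z hz).2
    have hψu : HasDerivAt (fun u => cur Hx x s u) (pd Hx x s (e.symm y)) (e.symm y) :=
      cur_hasDerivAt_t hHx hx s (e.symm y)
    have hcomp : HasDerivAt (fun z => cur Hx x s (e.symm z))
        ((pd Ht x s (e.symm y))⁻¹ • pd Hx x s (e.symm y)) y := hψu.scomp y hJ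
    have hev : xs =ᶠ[𝓝 y] fun z => cur Hx x s (e.symm z) := by
      filter_upwards [hUopen.mem_nhds hy] with z hz
      exact hxs_on z hz
    exact (hcomp.congr_of_eventuallyEq hev : _)
  refine ⟨?_, ?_⟩
  · have := hder (θ t₁) hτU
    rwa [hsymm_t₁] at this
  · have hev2 : (fun τ => L (τ, xs τ, deriv xs τ)) =ᶠ[𝓝 (θ t₁)]
        fun y => L (y, cur Hx x s (e.symm y), ws Ht Hx x s (e.symm y)) := by
      filter_upwards [hUopen.mem_nhds hτU] with y hy
      rw [hxs_on y hy, (hder y hy).deriv]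
    refine ContinuousAt.congr ?_ hev2.symm
    have hJcont : ContinuousAt e.symm (θ t₁) :=
      e.continuousOn_symm.continuousAt (e.open_target.mem_nhds htgt)
    have hpcont : Continuous (fun u => pd Ht x s u) :=
      (pd_continuous hHt hx).comp (continuous_const.prodMk continuous_id)
    have hqcont : Continuous (fun u => pd Hx x s u) :=
      (pd_continuous hHx hx).comp (continuous_const.prodMk continuous_id)
    have hψcont : Continuous (fun u => cur Hx x s u) :=
      (cur_continuous hHx hx).comp (continuous_const.prodMk continuous_id)
    have hwcont : ContinuousAt (fun u => ws Ht Hx x s u) t₁ := by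
      have : pd Ht x s t₁ ≠ 0 := hp1
      exact (hpcont.continuousAt.inv₀ this).smul hqcont.continuousAt
    have hcomp2 : ContinuousAt
        (fun y => (y, cur Hx x s (e.symm y), ws Ht Hx x s (e.symm y))) (θ t₁) := by
      rw [← hsymm_t₁] at hwcont
      exact continuousAt_id.prodMk ((hψcont.continuousAt.comp hJcont).prodMk (hwcont.comp hJcont))
    exact hL.continuous.continuousAt.comp hcomp2

include hL hHt hHx hx in
/-- Change of variables: the invariance integral as an integral of `GG`. -/
lemma change_of_variables {s α β : ℝ} (hαβ : α ≤ β)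
    (hpos : ∀ u ∈ Icc α β, 0 < pd Ht x s u)
    {xs : ℝ → Fin n → ℝ}
    (hxs : ∀ u ∈ Icc α β, xs (Ht (s, u, x u)) = Hx (s, u, x u)) :
    (∫ τ in (Ht (s, α, x α))..(Ht (s, β, x β)), L (τ, xs τ, deriv xs τ))
      = ∫ u in α..β, GG L Ht Hx x s u := by
  set θ : ℝ → ℝ := fun u => cur Ht x s u with hθdef
  set g₀ : ℝ → ℝ := fun τ => L (τ, xs τ, deriv xs τ) with hg₀def
  have h1 : ∀ u, HasDerivAt θ (pd Ht x s u) u := fun u => cur_hasDerivAt_t hHt hx s u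
  have hθcont : Continuous θ :=
    (cur_continuous hHt hx).comp (continuous_const.prodMk continuous_id)
  have hmono : StrictMonoOn θ (Icc α β) := by
    apply strictMonoOn_of_hasDerivWithinAt_pos (convex_Icc α β) hθcont.continuousOn
      (fun u _ => (h1 u).hasDerivWithinAt)
    intro u hu
    rw [interior_Icc] at hu
    exact hpos u (Ioo_subset_Icc_self hu)
  have hθαβ : θ α ≤ θ β := by
    rcases eq_or_lt_of_le hαβ with h | h
    · rw [h]
    · exact (hmono (left_mem_Icc.mpr hαβ) (right_mem_Icc.mpr hαβ) h).le
  -- pointwise facts from local_rep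
  have hrep := fun t₁ (ht₁ : t₁ ∈ Ioo α β) => local_rep hL hHt hHx hx hpos hxs ht₁
  have hg₀θ : ∀ t₁ ∈ Ioo α β, g₀ (θ t₁) = L (θ t₁, cur Hx x s t₁, ws Ht Hx x s t₁) := by
    intro t₁ ht₁
    have hd := (hrep t₁ ht₁).1
    have hxsv : xs (θ t₁) = cur Hx x s t₁ := hxs t₁ (Ioo_subset_Icc_self ht₁)
    simp only [hg₀def]
    rw [hxsv, hd.deriv]
  -- images
  have himg_Ioo : θ '' Ioo α β = Ioo (θ α) (θ β) := by
    apply Subset.antisymm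
    · rintro τ ⟨u, hu, rfl⟩
      exact ⟨hmono (left_mem_Icc.mpr hαβ) (Ioo_subset_Icc_self hu) hu.1,
        hmono (Ioo_subset_Icc_self hu) (right_mem_Icc.mpr hαβ) hu.2⟩
    · exact intermediate_value_Ioo hαβ hθcont.continuousOn
  have himg_Icc : θ '' Icc α β = Icc (θ α) (θ β) := by
    apply Subset.antisymm
    · rintro τ ⟨u, hu, rfl⟩
      have hm := hmono.monotoneOn
      exact ⟨hm (left_mem_Icc.mpr hαβ) hu hu.1, hm hu (right_mem_Icc.mpr hαβ) hu.2⟩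
    · exact intermediate_value_Icc hαβ hθcont.continuousOn
  -- continuity of the clean integrand on the closed interval
  have hGGcont : ∀ u ∈ Icc α β, ContinuousAt (fun u' => GG L Ht Hx x s u') u := by
    intro u hu
    have hpu : pd Ht x s u ≠ 0 := ne_of_gt (hpos u hu)
    have hpcont : Continuous (fun u' => pd Ht x s u') :=
      (pd_continuous hHt hx).comp (continuous_const.prodMk continuous_id)
    have hqcont : Continuous (fun u' => pd Hx x s u') :=
      (pd_continuous hHx hx).comp (continuous_const.prodMk continuous_id)
    have hψcont : Continuous (fun u' => cur Hx x s u') :=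
      (cur_continuous hHx hx).comp (continuous_const.prodMk continuous_id)
    have hwcont : ContinuousAt (fun u' => ws Ht Hx x s u') u :=
      (hpcont.continuousAt.inv₀ hpu).smul hqcont.continuousAt
    exact ((hL.continuous.continuousAt.comp
      (hθcont.continuousAt.prodMk (hψcont.continuousAt.prodMk hwcont))).mul hpcont.continuousAt)
  have hmcont : ∀ u ∈ Icc α β,
      ContinuousAt (fun u' => L (θ u', cur Hx x s u', ws Ht Hx x s u')) u := by
    intro u hu
    have hpu : pd Ht x s u ≠ 0 := ne_of_gt (hpos u hu)
    have hpcont : Continuous (fun u' => pd Ht x s u') :=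
      (pd_continuous hHt hx).comp (continuous_const.prodMk continuous_id)
    have hqcont : Continuous (fun u' => pd Hx x s u') :=
      (pd_continuous hHx hx).comp (continuous_const.prodMk continuous_id)
    have hψcont : Continuous (fun u' => cur Hx x s u') :=
      (cur_continuous hHx hx).comp (continuous_const.prodMk continuous_id)
    have hwcont : ContinuousAt (fun u' => ws Ht Hx x s u') u :=
      (hpcont.continuousAt.inv₀ hpu).smul hqcont.continuousAt
    exact hL.continuous.continuousAt.comp
      (hθcont.continuousAt.prodMk (hψcont.continuousAt.prodMk hwcont))
  -- a bound for the integrand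
  obtain ⟨M, hM⟩ := isCompact_Icc.exists_bound_of_continuousOn
    (f := fun u => L (θ u, cur Hx x s u, ws Ht Hx x s u))
    (fun u hu => (hmcont u hu).continuousWithinAt)
  -- integrability of g₀ on the closed image interval
  have hg1 : IntegrableOn g₀ (θ '' (Set.uIcc α β)) := by
    rw [uIcc_of_le hαβ, himg_Icc, integrableOn_Icc_iff_integrableOn_Ioo, ← himg_Ioo]
    have hcontIoo : ContinuousOn g₀ (θ '' Ioo α β) := by
      rintro τ ⟨u, hu, rfl⟩
      exact ((hrep u hu).2).continuousWithinAt
    refine ⟨hcontIoo.aestronglyMeasurable ?_, ?_⟩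
    · rw [himg_Ioo]; exact measurableSet_Ioo
    · apply MeasureTheory.HasFiniteIntegral.restrict_of_bounded (C := M)
      · rw [himg_Ioo]; exact measure_Ioo_lt_top
      · rw [MeasureTheory.ae_restrict_iff' (by rw [himg_Ioo]; exact measurableSet_Ioo)]
        refine Eventually.of_forall ?_
        rintro τ ⟨u, hu, rfl⟩
        rw [hg₀θ u hu]
        exact hM u (Ioo_subset_Icc_self hu)
  -- integrability of the pulled-back integrand
  have hGGint : IntegrableOn (fun u => GG L Ht Hx x s u) (Icc α β) :=
    ContinuousOn.integrableOn_Icc (fun u hu => (hGGcont u hu).continuousWithinAt)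
  have hg2 : IntegrableOn (fun u => pd Ht x s u • (g₀ ∘ θ) u) (Set.uIcc α β) := by
    rw [uIcc_of_le hαβ, integrableOn_Icc_iff_integrableOn_Ioo]
    refine ((hGGint.mono_set Ioo_subset_Icc_self).congr_fun ?_ measurableSet_Ioo)
    intro u hu
    simp only [Function.comp]
    rw [hg₀θ u hu]
    simp only [GG, smul_eq_mul]
    ring
  -- change of variables
  have hcov := intervalIntegral.integral_comp_smul_deriv''' (a := α) (b := β)
    (f := θ) (f' := fun u => pd Ht x s u) (g := g₀)
    hθcont.continuousOn
    (by
      rw [min_eq_left hαβ, max_eq_right hαβ]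
      exact fun u hu => (h1 u).hasDerivWithinAt)
    (by
      rw [min_eq_left hαβ, max_eq_right hαβ]
      rintro τ ⟨u, hu, rfl⟩
      exact ((hrep u hu).2).continuousWithinAt)
    hg1 hg2
  -- identify the two interval integrals
  have hfinal : (∫ u in α..β, pd Ht x s u • (g₀ ∘ θ) u)
      = ∫ u in α..β, GG L Ht Hx x s u := by
    apply intervalIntegral.integral_congr_ae
    have hβnull : ∀ᵐ u : ℝ, u ≠ β := by
      rw [MeasureTheory.ae_iff]
      simp only [not_not, Set.setOf_eq_eq_singleton]
      exact Real.volume_singleton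
    filter_upwards [hβnull] with u hne hu
    rw [uIoc_of_le hαβ] at hu
    have huIoo : u ∈ Ioo α β := ⟨hu.1, lt_of_le_of_ne hu.2 hne⟩
    simp only [Function.comp]
    rw [hg₀θ u huIoo]
    simp only [GG, smul_eq_mul]
    ring
  have hgoal : (∫ τ in θ α..θ β, g₀ τ) = ∫ u in α..β, GG L Ht Hx x s u := by
    rw [← hcov]
    simpa using hfinal
  exact hgoal

end main

end Stmt1Aux

open Stmt1Aux

/-- Necessary and sufficient condition of invariance for the fundamental
problem of the calculus of variations (Corollary of Theorem 1, m = 1):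
the functional `∫ L(t,x,x') dt` is invariant under the local one-parameter
group of transformations `(Ht, Hx)` with infinitesimal generators `T`, `X`
if and only if
`∂L/∂t·T + ∇ₓL·X + ∇ᵥL·(dX/dt − v·dT/dt) + L·dT/dt = 0` for all `(t,x,v)`. -/
theorem stmt_1 (n : ℕ) (hn : 1 ≤ n)
    (L : ℝ × (Fin n → ℝ) × (Fin n → ℝ) → ℝ) (hL : ContDiff ℝ 1 L)
    (Ht : ℝ × ℝ × (Fin n → ℝ) → ℝ) (Hx : ℝ × ℝ × (Fin n → ℝ) → (Fin n → ℝ))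
    (hHt : ContDiff ℝ 2 Ht) (hHx : ContDiff ℝ 2 Hx)
    (T : ℝ × (Fin n → ℝ) → ℝ) (X : ℝ × (Fin n → ℝ) → (Fin n → ℝ))
    (hT : ContDiff ℝ 1 T) (hX : ContDiff ℝ 1 X)
    (hHt0 : ∀ (t : ℝ) (y : Fin n → ℝ), Ht (0, t, y) = t)
    (hHx0 : ∀ (t : ℝ) (y : Fin n → ℝ), Hx (0, t, y) = y)
    (hHts : ∀ (s t : ℝ) (y : Fin n → ℝ),
      deriv (fun s' => Ht (s', t, y)) s = T (Ht (s, t, y), Hx (s, t, y)))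
    (hHxs : ∀ (s t : ℝ) (y : Fin n → ℝ),
      deriv (fun s' => Hx (s', t, y)) s = X (Ht (s, t, y), Hx (s, t, y)))
    (hTdef : ∀ (t : ℝ) (y : Fin n → ℝ), T (t, y) = deriv (fun s => Ht (s, t, y)) 0)
    (hXdef : ∀ (t : ℝ) (y : Fin n → ℝ), X (t, y) = deriv (fun s => Hx (s, t, y)) 0) :
    (∀ x : ℝ → Fin n → ℝ, ContDiff ℝ 1 x →
      ∀ a b α β : ℝ, a ≤ α → α ≤ β → β ≤ b →
      ∃ ε > (0:ℝ), ∀ s : ℝ, |s| < ε →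
        (∀ t ∈ Set.Icc α β, 0 < deriv (fun u => Ht (s, u, x u)) t) →
        ∀ xs : ℝ → Fin n → ℝ,
          (∀ t ∈ Set.Icc α β, xs (Ht (s, t, x t)) = Hx (s, t, x t)) →
          (∫ τ in (Ht (s, α, x α))..(Ht (s, β, x β)), L (τ, xs τ, deriv xs τ))
            = ∫ t in α..β, L (t, x t, deriv x t))
    ↔ (∀ (t : ℝ) (y v : Fin n → ℝ),
        fderiv ℝ L (t, y, v) (1, 0, 0) * T (t, y)
          + fderiv ℝ L (t, y, v) (0, X (t, y), 0)
          + fderiv ℝ L (t, y, v)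
              (0, 0, fderiv ℝ X (t, y) (1, v) - fderiv ℝ T (t, y) (1, v) • v)
          + L (t, y, v) * fderiv ℝ T (t, y) (1, v) = 0) := by
  constructor
  · -- forward direction: invariance implies the identity
    intro hInv t₀ y₀ v₀
    set x : ℝ → Fin n → ℝ := fun u => y₀ + (u - t₀) • v₀ with hxdef
    have hx : ContDiff ℝ 1 x :=
      contDiff_const.add ((contDiff_id.sub contDiff_const).smul contDiff_const)
    have hxderiv : ∀ u, deriv x u = v₀ := by
      intro u
      have h1 : HasDerivAt (fun u : ℝ => (u - t₀) • v₀) ((1 : ℝ) • v₀) u :=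
        ((hasDerivAt_id u).sub_const t₀).smul_const v₀
      have h2 : HasDerivAt x v₀ u := by have := h1.const_add y₀; rw [one_smul] at this; exact this
      exact h2.deriv
    have hxt₀ : x t₀ = y₀ := by simp [hxdef]
    set Zc : ℝ → ℝ := fun u => Z L T X u (x u) v₀ with hZcdef
    have hZcont : Continuous Zc :=
      (Z_continuous hL hT hX).comp
        (continuous_id.prodMk (hx.continuous.prodMk continuous_const))
    -- F' at σ = 0 equals Zc
    have hF'0 : ∀ u : ℝ, pd Ht x 0 u * Z L T X (cur Ht x 0 u) (cur Hx x 0 u) (ws Ht Hx x 0 u)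
        = Zc u := by
      intro u
      have h1 : pd Ht x 0 u = 1 := pd_Ht_zero hHt hx hHt0 u
      have h2 : cur Ht x 0 u = u := hHt0 u (x u)
      have h3 : cur Hx x 0 u = x u := hHx0 u (x u)
      have h4 : ws Ht Hx x 0 u = v₀ := by
        unfold ws
        rw [h1, pd_Hx_zero hHx hx hHx0 u, hxderiv u]
        simp
      rw [h1, h2, h3, h4, one_mul]
    have hInt0 : ∀ δ : ℝ, 0 < δ → (∫ u in t₀..(t₀ + δ), Zc u) = 0 := by
      intro δ hδ
      set α := t₀ with hα
      set β := t₀ + δ with hβ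
      have hαβ : α ≤ β := by simp [hα, hβ]; linarith
      obtain ⟨ε₁, hε₁pos, hε₁⟩ := pos_tube hHt hx hHt0 α β
      obtain ⟨ε₂, hε₂pos, hε₂inv⟩ := hInv x hx α β α β le_rfl hαβ le_rfl
      set ε := min ε₁ ε₂ with hεdef
      have hεpos : 0 < ε := lt_min hε₁pos hε₂pos
      set Φ : ℝ → ℝ := fun σ => ∫ u in α..β, GG L Ht Hx x σ u with hΦdef
      -- Step A : Φ is constant near 0
      have hstepA : ∀ σ : ℝ, |σ| < ε → Φ σ = ∫ u in α..β, L (u, x u, deriv x u) := by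
        intro σ hσ
        have hσ₁ : |σ| < ε₁ := lt_of_lt_of_le hσ (min_le_left _ _)
        have hσ₂ : |σ| < ε₂ := lt_of_lt_of_le hσ (min_le_right _ _)
        have hpos' : ∀ u ∈ Set.Icc α β, 0 < pd Ht x σ u := fun u hu => hε₁ σ u hσ₁ hu
        -- construct xs
        have hθcont : Continuous (fun u => cur Ht x σ u) :=
          (cur_continuous hHt hx).comp (continuous_const.prodMk continuous_id)
        have hmono : StrictMonoOn (fun u => cur Ht x σ u) (Set.Icc α β) := by
          apply strictMonoOn_of_hasDerivWithinAt_pos (convex_Icc α β) hθcont.continuousOn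
            (fun u _ => (cur_hasDerivAt_t hHt hx σ u).hasDerivWithinAt)
          intro u hu
          rw [interior_Icc] at hu
          exact hpos' u (Set.Ioo_subset_Icc_self hu)
        set xs : ℝ → Fin n → ℝ := fun τ =>
          cur Hx x σ (Function.invFunOn (fun u => cur Ht x σ u) (Set.Icc α β) τ) with hxsdef
        have hxs : ∀ u ∈ Set.Icc α β, xs (Ht (σ, u, x u)) = Hx (σ, u, x u) := by
          intro u hu
          have := hmono.injOn.leftInvOn_invFunOn hu
          simp only [hxsdef]
          rw [show Ht (σ, u, x u) = (fun u => cur Ht x σ u) u from rfl, this]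
          rfl
        have hposhyp : ∀ u ∈ Set.Icc α β, 0 < deriv (fun u' => Ht (σ, u', x u')) u := by
          intro u hu
          rw [deriv_cur_t hHt hx σ u]
          exact hpos' u hu
        have happ := hε₂inv σ hσ₂ hposhyp xs hxs
        have hcov := change_of_variables hL hHt hHx hx hαβ hpos' hxs
        rw [hcov] at happ
        exact happ
      -- Step B : derivative of Φ at 0 by dominated convergence
      have hstepB : HasDerivAt Φ (∫ u in α..β, Zc u) 0 := by
        have hb2 : (0 : ℝ) < ε / 2 := by linarith
        have hpcont : Continuous (fun st : ℝ × ℝ => pd Ht x st.1 st.2) := pd_continuous hHt hx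
        have hqcont : Continuous (fun st : ℝ × ℝ => pd Hx x st.1 st.2) := pd_continuous hHx hx
        have hθcont2 : Continuous (fun st : ℝ × ℝ => cur Ht x st.1 st.2) := cur_continuous hHt hx
        have hψcont2 : Continuous (fun st : ℝ × ℝ => cur Hx x st.1 st.2) := cur_continuous hHx hx
        set F' : ℝ → ℝ → ℝ := fun σ u =>
          pd Ht x σ u * Z L T X (cur Ht x σ u) (cur Hx x σ u) (ws Ht Hx x σ u) with hF'def
        have hF'cont : ∀ σ u, |σ| < ε₁ → u ∈ Set.Icc α β →
            ContinuousAt (fun st : ℝ × ℝ => F' st.1 st.2) (σ, u) := by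
          intro σ u hσ hu
          have hp0 : pd Ht x σ u ≠ 0 := ne_of_gt (hε₁ σ u hσ hu)
          have hwA : ContinuousAt (fun st : ℝ × ℝ => ws Ht Hx x st.1 st.2) (σ, u) :=
            (hpcont.continuousAt.inv₀ hp0).smul hqcont.continuousAt
          exact hpcont.continuousAt.mul ((Z_continuous hL hT hX).continuousAt.comp
            (hθcont2.continuousAt.prodMk (hψcont2.continuousAt.prodMk hwA)))
        have hball : ∀ σ : ℝ, σ ∈ Metric.closedBall (0 : ℝ) (ε / 2) → |σ| < ε₁ := by
          intro σ hσ
          rw [Metric.mem_closedBall, Real.dist_eq, sub_zero] at hσ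
          calc |σ| ≤ ε / 2 := hσ
            _ < ε := by linarith
            _ ≤ ε₁ := min_le_left _ _
        obtain ⟨C, hC⟩ :=
          ((isCompact_closedBall (0 : ℝ) (ε / 2)).prod isCompact_Icc).exists_bound_of_continuousOn
            (f := fun st : ℝ × ℝ => F' st.1 st.2)
            (fun st hst => (hF'cont st.1 st.2 (hball st.1 hst.1) hst.2).continuousWithinAt)
        have hmeas : ∀ σ : ℝ, MeasureTheory.AEStronglyMeasurable (fun u => GG L Ht Hx x σ u)
            (MeasureTheory.volume.restrict (Set.uIoc α β)) := by
          intro σ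
          have m1 : Continuous (fun u => cur Ht x σ u) :=
            hθcont2.comp (continuous_const.prodMk continuous_id)
          have m2 : Continuous (fun u => cur Hx x σ u) :=
            hψcont2.comp (continuous_const.prodMk continuous_id)
          have m3 : Continuous (fun u => pd Ht x σ u) :=
            hpcont.comp (continuous_const.prodMk continuous_id)
          have m4 : Continuous (fun u => pd Hx x σ u) :=
            hqcont.comp (continuous_const.prodMk continuous_id)
          have m5 : Measurable (fun u => ws Ht Hx x σ u) :=
            (m3.measurable.inv.smul m4.measurable)
          have hm : Measurable (fun u => GG L Ht Hx x σ u) :=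
            ((hL.continuous.measurable.comp
              (m1.measurable.prodMk (m2.measurable.prodMk m5))).mul m3.measurable)
          exact hm.aestronglyMeasurable
        have hGG0 : (fun u => GG L Ht Hx x 0 u) = fun u => L (u, x u, deriv x u) := by
          funext u; exact GG_zero hHt hHx hx hHt0 hHx0 u
        have hF_int : IntervalIntegrable (fun u => GG L Ht Hx x 0 u)
            MeasureTheory.volume α β := by
          rw [hGG0]
          exact (hL.continuous.comp (continuous_id.prodMk
            (hx.continuous.prodMk (hx.continuous_deriv le_rfl)))).intervalIntegrable α β
        have hF'0eq : F' 0 = Zc := funext hF'0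
        have hres := (intervalIntegral.hasDerivAt_integral_of_dominated_loc_of_deriv_le
          (F := fun σ u => GG L Ht Hx x σ u) (F' := F') (x₀ := (0 : ℝ))
          (bound := fun _ => C) (Metric.ball_mem_nhds (0 : ℝ) hb2)
          (Filter.Eventually.of_forall hmeas)
          hF_int
          (by rw [hF'0eq]; exact hZcont.aestronglyMeasurable.restrict)
          (Filter.Eventually.of_forall (fun u => fun hu σ hσ => by
            have hu' : u ∈ Set.Icc α β := by
              rw [Set.uIoc_of_le hαβ] at hu
              exact Set.Ioc_subset_Icc_self hu
            have hσ' : σ ∈ Metric.closedBall (0 : ℝ) (ε / 2) :=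
              Metric.ball_subset_closedBall hσ
            exact hC (σ, u) ⟨hσ', hu'⟩))
          (intervalIntegrable_const)
          (Filter.Eventually.of_forall (fun u => fun hu σ hσ => by
            have hu' : u ∈ Set.Icc α β := by
              rw [Set.uIoc_of_le hαβ] at hu
              exact Set.Ioc_subset_Icc_self hu
            have hσ' : |σ| < ε₁ := hball σ (Metric.ball_subset_closedBall hσ)
            exact GG_hasDerivAt_s hL hHt hHx hT hX hx hHts hHxs σ u
              (ne_of_gt (hε₁ σ u hσ' hu'))))).2
        rw [hF'0eq] at hres
        exact hres
      -- Step C : Φ is locally constant hence derivative 0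
      have hstepC : HasDerivAt Φ 0 0 := by
        have hev : Φ =ᶠ[𝓝 (0 : ℝ)] fun _ => ∫ u in α..β, L (u, x u, deriv x u) := by
          filter_upwards [Metric.ball_mem_nhds (0 : ℝ) hεpos] with σ hσ
          rw [Metric.mem_ball, Real.dist_eq, sub_zero] at hσ
          exact hstepA σ hσ
        exact (hasDerivAt_const (0 : ℝ) _).congr_of_eventuallyEq hev
      exact hstepB.unique hstepC
    -- conclude pointwise vanishing at t₀
    have hZt₀ : Zc t₀ = 0 := by
      have hFder : HasDerivAt (fun r => ∫ v in t₀..r, Zc v) (Zc t₀) t₀ :=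
        intervalIntegral.integral_hasDerivAt_right
          (hZcont.intervalIntegrable t₀ t₀)
          (hZcont.stronglyMeasurableAtFilter volume (𝓝 t₀))
          hZcont.continuousAt
      have hzero : ∀ r ∈ Set.Ici t₀, (∫ v in t₀..r, Zc v) = 0 := by
        intro r hr
        rcases eq_or_lt_of_le (Set.mem_Ici.mp hr) with h | h
        · rw [← h, intervalIntegral.integral_same]
        · have := hInt0 (r - t₀) (by linarith)
          rwa [add_sub_cancel] at this
      have h1 : HasDerivWithinAt (fun r => ∫ v in t₀..r, Zc v) (Zc t₀) (Set.Ici t₀) t₀ :=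
        hFder.hasDerivWithinAt
      have h2 : HasDerivWithinAt (fun r => ∫ v in t₀..r, Zc v) 0 (Set.Ici t₀) t₀ := by
        apply (hasDerivWithinAt_const t₀ (Set.Ici t₀) (0 : ℝ)).congr hzero
        exact hzero t₀ Set.self_mem_Ici
      exact (uniqueDiffOn_Ici t₀ t₀ Set.self_mem_Ici).eq_deriv _ h1 h2
    have hfin : Z L T X t₀ y₀ v₀ = 0 := by
      have h := hZt₀
      simp only [hZcdef] at h
      rwa [hxt₀] at h
    exact hfin
  · -- backward direction: the identity implies invariance
    intro hRHS x hx a b α β haα hαβ hβb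
    have hZ : ∀ (t : ℝ) (y v : Fin n → ℝ), Z L T X t y v = 0 := hRHS
    obtain ⟨ε, hεpos, hε⟩ := pos_tube hHt hx hHt0 α β
    refine ⟨ε, hεpos, fun s hs _ xs hxs => ?_⟩
    have hpos' : ∀ u ∈ Set.Icc α β, 0 < pd Ht x s u := fun u hu => hε s u hs hu
    rw [change_of_variables hL hHt hHx hx hαβ hpos' hxs]
    have h1 : (∫ u in α..β, GG L Ht Hx x s u) = ∫ u in α..β, GG L Ht Hx x 0 u := by
      apply intervalIntegral.integral_congr
      intro u hu
      rw [Set.uIcc_of_le hαβ] at hu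
      exact GG_const hL hHt hHx hT hX hx hHts hHxs hZ hε hs hu
    rw [h1]
    apply intervalIntegral.integral_congr
    intro u _
    exact GG_zero hHt hHx hx hHt0 hHx0 u
end

section
/- Let n ≥ 1 and let L : ℝ × ℝⁿ × ℝⁿ → ℝ, written L(t,x,v), be of class C². Let T : ℝ × ℝⁿ → ℝ and X : ℝ × ℝⁿ → ℝⁿ be C¹ maps satisfying, for all (t,x,v) ∈ ℝ × ℝⁿ × ℝⁿ: ∂L/∂t(t,x,v)·T(t,x) + ∇_x L(t,x,v)·X(t,x) + ∇_v L(t,x,v)·(∂X/∂t(t,x) + D_x X(t,x)·v − v·(∂T/∂t(t,x) + ∇_x T(t,x)·v)) + L(t,x,v)·(∂T/∂t(t,x) + ∇_x T(t,x)·v) = 0, where D_x X denotes the Jacobian matrix of X with respect to x. Then for every C² curve x : [a,b] → ℝⁿ satisfying the Euler–Lagrange equation (d/dt)[∇_v L(t,x(t),x'(t))] = ∇_x L(t,x(t),x'(t)) on [a,b], the function t ↦ ∇_v L(t,x(t),x'(t))·X(t,x(t)) + (L(t,x(t),x'(t)) − ∇_v L(t,x(t),x'(t))·x'(t))·T(t,x(t))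 is constant on [a,b]. -/
/-- Noether's theorem for the fundamental problem of the calculus of
variations (Corollary of Theorem 2, m = 1): if the generators `T`, `X`
satisfy the variational-symmetry identity, then along every solution of the
Euler–Lagrange equation the quantity
`∇_v L·X + (L − ∇_v L·x')·T` is constant. -/
theorem stmt_3 (n : ℕ) (hn : 1 ≤ n)
    (L : ℝ × (Fin n → ℝ) × (Fin n → ℝ) → ℝ) (hL : ContDiff ℝ 2 L)
    (T : ℝ × (Fin n → ℝ) → ℝ) (X : ℝ × (Fin n → ℝ) → (Fin n → ℝ))
    (hT : ContDiff ℝ 1 T) (hX : ContDiff ℝ 1 X)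
    (hsym : ∀ (t : ℝ) (y v : Fin n → ℝ),
      fderiv ℝ L (t, y, v) (1, 0, 0) * T (t, y)
        + fderiv ℝ L (t, y, v) (0, X (t, y), 0)
        + fderiv ℝ L (t, y, v)
            (0, 0, fderiv ℝ X (t, y) (1, v) - fderiv ℝ T (t, y) (1, v) • v)
        + L (t, y, v) * fderiv ℝ T (t, y) (1, v) = 0)
    (a b : ℝ) (hab : a ≤ b)
    (x : ℝ → Fin n → ℝ) (hx : ContDiff ℝ 2 x)
    (hEL : ∀ t ∈ Set.Icc a b, ∀ w : Fin n → ℝ,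
      deriv (fun s => fderiv ℝ L (s, x s, deriv x s) (0, 0, w)) t
        = fderiv ℝ L (t, x t, deriv x t) (0, w, 0)) :
    ∃ c : ℝ, ∀ t ∈ Set.Icc a b,
      fderiv ℝ L (t, x t, deriv x t) (0, 0, X (t, x t))
        + (L (t, x t, deriv x t)
            - fderiv ℝ L (t, x t, deriv x t) (0, 0, deriv x t)) * T (t, x t)
        = c := by
  classical
  have hx1 : ContDiff ℝ 1 x := hx.of_le one_le_two
  have hdx : ContDiff ℝ 1 (deriv x) := by
    have h2 : ContDiff ℝ ((1 : WithTop ℕ∞) + 1) x := by exact_mod_cast hx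
    exact (contDiff_succ_iff_deriv.mp h2).2.2
  have hgC : ContDiff ℝ 1 (fun s : ℝ => ((s, x s, deriv x s) : ℝ × (Fin n → ℝ) × (Fin n → ℝ))) :=
    contDiff_id.prodMk (hx1.prodMk hdx)
  have hL' : ContDiff ℝ 1 (fderiv ℝ L) := hL.fderiv_right (by norm_num)
  have hΦC : ContDiff ℝ 1 (fun s : ℝ => fderiv ℝ L (s, x s, deriv x s)) := hL'.comp hgC
  set F : ℝ → ℝ := fun s =>
    fderiv ℝ L (s, x s, deriv x s) (0, 0, X (s, x s))
      + (L (s, x s, deriv x s) - fderiv ℝ L (s, x s, deriv x s) (0, 0, deriv x s)) * T (s, x s)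
    with hFdef
  have hderiv0 : ∀ t ∈ Set.Icc a b, HasDerivAt F 0 t := by
    intro t ht
    set v : Fin n → ℝ := deriv x t with hv
    set vd : Fin n → ℝ := deriv (deriv x) t with hvd
    set p := fderiv ℝ L (t, x t, deriv x t) with hp
    set D := deriv (fun s : ℝ => fderiv ℝ L (s, x s, deriv x s)) t with hD
    set Xd : Fin n → ℝ := fderiv ℝ X (t, x t) (1, v) with hXd
    set Td : ℝ := fderiv ℝ T (t, x t) (1, v) with hTd
    have hxd : HasDerivAt x v t := (hx1.differentiable one_ne_zero t).hasDerivAt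
    have hxdd : HasDerivAt (deriv x) vd t := (hdx.differentiable one_ne_zero _).hasDerivAt
    have hgd : HasDerivAt (fun s : ℝ => ((s, x s, deriv x s) : ℝ × (Fin n → ℝ) × (Fin n → ℝ)))
        (1, v, vd) t := (hasDerivAt_id t).prodMk (hxd.prodMk hxdd)
    have hΦd : HasDerivAt (fun s : ℝ => fderiv ℝ L (s, x s, deriv x s)) D t :=
      (hΦC.differentiable one_ne_zero t).hasDerivAt
    have hpair : HasDerivAt (fun s : ℝ => ((s, x s) : ℝ × (Fin n → ℝ))) ((1 : ℝ), v) t :=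
      (hasDerivAt_id t).prodMk hxd
    have hXc : HasDerivAt (fun s : ℝ => X (s, x s)) Xd t :=
      (hX.differentiable one_ne_zero (t, x t)).hasFDerivAt.comp_hasDerivAt t hpair
    have hTc : HasDerivAt (fun s : ℝ => T (s, x s)) Td t :=
      (hT.differentiable one_ne_zero (t, x t)).hasFDerivAt.comp_hasDerivAt t hpair
    have hLc : HasDerivAt (fun s : ℝ => L (s, x s, deriv x s)) (p (1, v, vd)) t :=
      (hL.differentiable two_ne_zero (t, x t, deriv x t)).hasFDerivAt.comp_hasDerivAt t hgd
    have key : ∀ w : Fin n → ℝ, D (0, 0, w) = p (0, w, 0) := by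
      intro w
      have h1 : HasDerivAt (fun s : ℝ => fderiv ℝ L (s, x s, deriv x s) (0, 0, w))
          (D (0, 0, w) + p ((0 : ℝ × (Fin n → ℝ) × (Fin n → ℝ)))) t :=
        hΦd.clm_apply (hasDerivAt_const t ((0 : ℝ), (0 : Fin n → ℝ), w))
      have h2 := h1.deriv
      have h3 := hEL t ht w
      rw [h2] at h3
      simpa using h3
    have hA : HasDerivAt (fun s : ℝ => fderiv ℝ L (s, x s, deriv x s) (0, 0, X (s, x s)))
        (D (0, 0, X (t, x t)) + p (0, 0, Xd)) t := by
      have hu : HasDerivAt (fun s : ℝ => (((0 : ℝ), (0 : Fin n → ℝ), X (s, x s)) :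
          ℝ × (Fin n → ℝ) × (Fin n → ℝ))) (0, 0, Xd) t :=
        (hasDerivAt_const t (0 : ℝ)).prodMk ((hasDerivAt_const t (0 : Fin n → ℝ)).prodMk hXc)
      exact hΦd.clm_apply hu
    have hB : HasDerivAt (fun s : ℝ => fderiv ℝ L (s, x s, deriv x s) (0, 0, deriv x s))
        (D (0, 0, v) + p (0, 0, vd)) t := by
      have hu : HasDerivAt (fun s : ℝ => (((0 : ℝ), (0 : Fin n → ℝ), deriv x s) :
          ℝ × (Fin n → ℝ) × (Fin n → ℝ))) (0, 0, vd) t :=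
        (hasDerivAt_const t (0 : ℝ)).prodMk ((hasDerivAt_const t (0 : Fin n → ℝ)).prodMk hxdd)
      exact hΦd.clm_apply hu
    have hF' : HasDerivAt F
        ((D (0, 0, X (t, x t)) + p (0, 0, Xd))
          + ((p (1, v, vd) - (D (0, 0, v) + p (0, 0, vd))) * T (t, x t)
            + (L (t, x t, deriv x t) - p (0, 0, v)) * Td)) t :=
      hA.add ((hLc.sub hB).mul hTc)
    have e3 : p (1, v, vd) = p (1, 0, 0) + p (0, v, 0) + p (0, 0, vd) := by
      have h : ((1 : ℝ), v, vd) = ((1 : ℝ), (0 : Fin n → ℝ), (0 : Fin n → ℝ))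
          + ((0 : ℝ), v, (0 : Fin n → ℝ)) + ((0 : ℝ), (0 : Fin n → ℝ), vd) := by
        simp [Prod.ext_iff]
      rw [h, map_add, map_add]
    have e4 : p (0, 0, Xd - Td • v) = p (0, 0, Xd) - Td * p (0, 0, v) := by
      have h : (((0 : ℝ), (0 : Fin n → ℝ), Xd - Td • v) : ℝ × (Fin n → ℝ) × (Fin n → ℝ))
          = ((0 : ℝ), (0 : Fin n → ℝ), Xd) - Td • ((0 : ℝ), (0 : Fin n → ℝ), v) := by
        simp [Prod.ext_iff]
      rw [h, map_sub, map_smul, smul_eq_mul]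
    have hs := hsym t (x t) v
    rw [← hp, ← hXd, ← hTd] at hs
    rw [e4] at hs
    have hz : (D (0, 0, X (t, x t)) + p (0, 0, Xd))
          + ((p (1, v, vd) - (D (0, 0, v) + p (0, 0, vd))) * T (t, x t)
            + (L (t, x t, deriv x t) - p (0, 0, v)) * Td) = 0 := by
      rw [key (X (t, x t)), key v, e3]
      linear_combination hs
    rw [hz] at hF'
    exact hF'
  have hcont : ContinuousOn F (Set.Icc a b) := fun t ht =>
    ((hderiv0 t ht).continuousAt).continuousWithinAt
  refine ⟨F a, fun t ht => ?_⟩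
  exact constant_of_has_deriv_right_zero hcont
    (fun s hs => ((hderiv0 s (Set.Ico_subset_Icc_self hs)).hasDerivWithinAt)) t ht
end

section
/- Let n, m ≥ 1, and let L : ℤ × (ℝⁿ)^{m+1} → ℝ, written L(k, y₀, y₁, …, y_m), be continuously differentiable in its vector arguments (y₀,…,y_m) for each k. Fix integers M and N ≥ 1, and let x : ℤ → ℝⁿ be a sequence that minimizes J[y] = Σ_{k=M}^{M+N−1} L(k, y(k), y(k+1), …, y(k+m)) over all sequences y : ℤ → ℝⁿ satisfying y(i) = x(i) for all i with M ≤ i ≤ M+m−1 and for all i with M+N ≤ i ≤ M+N+m−1. Then for every k with M ≤ k ≤ M+N−1−m, Σ_{j=0}^{m} ∇_{y_j}L(k+m−j, x(k+m−j), x(k+m−j+1), …, x(k+2m−j)) = 0. -/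
/-- Discrete Euler–Lagrange equation (necessary optimality condition) for the
discrete-time higher-order problem of the calculus of variations. -/
theorem stmt_4 (n m : ℕ) (hn : 1 ≤ n) (hm : 1 ≤ m)
    (L : ℤ → (Fin (m+1) → Fin n → ℝ) → ℝ)
    (hL : ∀ k : ℤ, ContDiff ℝ 1 (L k))
    (M N : ℤ) (hN : 1 ≤ N)
    (x : ℤ → Fin n → ℝ)
    (hmin : ∀ y : ℤ → Fin n → ℝ,
      (∀ i : ℤ, M ≤ i → i ≤ M + m - 1 → y i = x i) →
      (∀ i : ℤ, M + N ≤ i → i ≤ M + N + m - 1 → y i = x i) →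
      (∑ k ∈ Finset.Icc M (M + N - 1), L k (fun j => x (k + (j.val : ℤ)))) ≤
      (∑ k ∈ Finset.Icc M (M + N - 1), L k (fun j => y (k + (j.val : ℤ))))) :
    ∀ k : ℤ, M ≤ k → k ≤ M + N - 1 - m → ∀ w : Fin n → ℝ,
      (∑ j : Fin (m+1),
        fderiv ℝ (L (k + m - (j.val : ℤ)))
          (fun r => x (k + m - (j.val : ℤ) + (r.val : ℤ)))
          (Pi.single j w)) = 0 := by
  intro k hk1 hk2 w
  classical
  -- variation direction at each node
  set v : ℤ → Fin (m+1) → Fin n → ℝ :=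
    fun k' j => if k' + (j.val : ℤ) = k + m then w else 0 with hv
  -- single-term derivative value
  set g : ℤ → ℝ := fun k' =>
    fderiv ℝ (L k') (fun j => x (k' + (j.val : ℤ))) (v k') with hg
  -- perturbed sequence
  set u : ℝ → ℤ → Fin n → ℝ :=
    fun t i => x i + (if i = k + m then t • w else 0) with hu
  set F : ℝ → ℝ := fun t =>
    ∑ k' ∈ Finset.Icc M (M + N - 1),
      L k' (fun j => x (k' + (j.val : ℤ)) + t • v k' j) with hF
  -- F has a global minimum at 0
  have key : ∀ t : ℝ, F 0 ≤ F t := by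
    intro t
    have h1 : ∀ i : ℤ, M ≤ i → i ≤ M + m - 1 → u t i = x i := by
      intro i hi1 hi2
      have : i ≠ k + m := by omega
      simp [hu, this]
    have h2 : ∀ i : ℤ, M + N ≤ i → i ≤ M + N + m - 1 → u t i = x i := by
      intro i hi1 hi2
      have : i ≠ k + m := by omega
      simp [hu, this]
    have hmain := hmin (u t) h1 h2
    have e0 : F 0 = ∑ k' ∈ Finset.Icc M (M + N - 1),
        L k' (fun j => x (k' + (j.val : ℤ))) := by
      simp [hF]
    have e1 : F t = ∑ k' ∈ Finset.Icc M (M + N - 1),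
        L k' (fun j => u t (k' + (j.val : ℤ))) := by
      refine Finset.sum_congr rfl fun k' _ => ?_
      congr 1
      funext j
      simp only [hu, hv]
      split <;> simp
    rw [e0, e1]
    exact hmain
  -- F is differentiable at 0 with derivative ∑ g
  have hder : HasDerivAt F (∑ k' ∈ Finset.Icc M (M + N - 1), g k') 0 := by
    apply HasDerivAt.fun_sum
    intro k' _
    have hφ : HasDerivAt
        (fun t : ℝ => (fun j => x (k' + (j.val : ℤ))) + t • v k') (v k') 0 := by
      simpa using ((hasDerivAt_id (0:ℝ)).smul_const (v k')).const_add
        (fun j => x (k' + (j.val : ℤ)))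
    have hf : HasFDerivAt (L k')
        (fderiv ℝ (L k') (fun j => x (k' + (j.val : ℤ))))
        ((fun j => x (k' + (j.val : ℤ))) + (0:ℝ) • v k') := by
      simpa using (((hL k').differentiable one_ne_zero)
        (fun j => x (k' + (j.val : ℤ)))).hasFDerivAt
    have := hf.comp_hasDerivAt 0 hφ
    exact this
  -- derivative at local min is zero
  have hzero : (∑ k' ∈ Finset.Icc M (M + N - 1), g k') = 0 := by
    have hloc : IsLocalMin F 0 := Filter.Eventually.of_forall key
    exact hloc.hasDerivAt_eq_zero hder
  -- outside Icc k (k+m) the terms vanish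
  have hsub : Finset.Icc k (k + (m:ℤ)) ⊆ Finset.Icc M (M + N - 1) := by
    intro a ha
    simp only [Finset.mem_Icc] at ha ⊢
    omega
  have hrestrict : (∑ k' ∈ Finset.Icc M (M + N - 1), g k')
      = ∑ k' ∈ Finset.Icc k (k + (m:ℤ)), g k' := by
    refine (Finset.sum_subset hsub ?_).symm
    intro k' _ hk'
    simp only [Finset.mem_Icc, not_and_or, not_le] at hk'
    have hv0 : v k' = 0 := by
      funext j
      have hj := j.isLt
      have : k' + (j.val : ℤ) ≠ k + m := by omega
      simp [hv, this]
    simp [hg, hv0]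
  -- reindex Icc k (k+m) by j ↦ k+m-j
  have hreindex : (∑ j : Fin (m+1), g (k + (m:ℤ) - (j.val : ℤ)))
      = ∑ k' ∈ Finset.Icc k (k + (m:ℤ)), g k' := by
    rw [Fin.sum_univ_eq_sum_range (fun jn => g (k + (m:ℤ) - (jn:ℤ)))]
    refine Finset.sum_nbij' (i := fun jn : ℕ => k + (m:ℤ) - (jn:ℤ))
      (j := fun k' : ℤ => (k + (m:ℤ) - k').toNat) ?_ ?_ ?_ ?_ ?_
    · intro a ha
      simp only [Finset.mem_range] at ha
      simp only [Finset.mem_Icc]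
      omega
    · intro a ha
      simp only [Finset.mem_Icc] at ha
      simp only [Finset.mem_range]
      omega
    · intro a ha
      simp only [Finset.mem_range] at ha
      show ((k + (m:ℤ) - (k + (m:ℤ) - (a:ℤ))).toNat) = a
      omega
    · intro a ha
      simp only [Finset.mem_Icc] at ha
      show k + (m:ℤ) - (((k + (m:ℤ) - a).toNat : ℕ) : ℤ) = a
      omega
    · intro a _
      rfl
  -- each term matches
  have hvj : ∀ j : Fin (m+1), v (k + (m:ℤ) - (j.val : ℤ)) = Pi.single j w := by
    intro j
    funext j'
    simp only [hv]
    by_cases h : j' = j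
    · subst h
      rw [if_pos (show (k + (m:ℤ) - (j'.val : ℤ)) + (j'.val : ℤ) = k + m by ring),
        Pi.single_apply, if_pos rfl]
    · rw [if_neg (fun hc => h (Fin.ext (by omega))), Pi.single_apply, if_neg h]
  calc (∑ j : Fin (m+1),
        fderiv ℝ (L (k + m - (j.val : ℤ)))
          (fun r => x (k + m - (j.val : ℤ) + (r.val : ℤ)))
          (Pi.single j w))
      = ∑ j : Fin (m+1), g (k + (m:ℤ) - (j.val : ℤ)) := by
        refine Finset.sum_congr rfl fun j _ => ?_
        simp only [hg]
        rw [hvj]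
    _ = ∑ k' ∈ Finset.Icc k (k + (m:ℤ)), g k' := hreindex
    _ = ∑ k' ∈ Finset.Icc M (M + N - 1), g k' := hrestrict.symm
    _ = 0 := hzero
end

section
/- Let n, m ≥ 1, and let L : ℤ × (ℝⁿ)^{m+1} → ℝ, written L(k, y₀, y₁, …, y_m), be continuously differentiable in its vector arguments (y₀,…,y_m) for each k. Let h : ℝ × ℤ × ℝⁿ → ℝⁿ, (s,k,y) ↦ h^s(k,y), be a local one-parameter group of transformations: h⁰(k,y) = y and ∂h^s/∂s(s,k,y) = X(k, h^s(k,y)) for all s, where X(k,y) = ∂h^s/∂s(0,k,y) is the infinitesimal generator. Then the following are equivalent. (i) Invariance: for every k ∈ ℤ, every (y₀,…,y_m) ∈ (ℝⁿ)^{m+1}, and every s in a neighborhood of 0, L(k, h^s(k,y₀), h^s(k+1,y₁), …, h^s(k+m,y_m)) = L(k, y₀, y₁, …, y_m). (ii) For every k ∈ ℤ and every (y₀,…,y_m) ∈ (ℝⁿ)^{m+1}: Σ_{j=0}^{m} ∇_{y_j}L(k, y₀, …, y_m)·X(k+j, y_j) = 0. -/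
/-- Necessary and sufficient condition of invariance for the discrete-time
higher-order problem of the calculus of variations (Theorem 3). -/
theorem stmt_5 (n m : ℕ) (hn : 1 ≤ n) (hm : 1 ≤ m)
    (L : ℤ → (Fin (m+1) → Fin n → ℝ) → ℝ)
    (hL : ∀ k : ℤ, ContDiff ℝ 1 (L k))
    (h : ℝ → ℤ → (Fin n → ℝ) → (Fin n → ℝ))
    (X : ℤ → (Fin n → ℝ) → (Fin n → ℝ))
    (hgrp0 : ∀ (k : ℤ) (y : Fin n → ℝ), h 0 k y = y)
    (hdiff : ∀ (k : ℤ) (y : Fin n → ℝ), Differentiable ℝ (fun s => h s k y))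
    (hgrp : ∀ (s : ℝ) (k : ℤ) (y : Fin n → ℝ),
      deriv (fun s' => h s' k y) s = X k (h s k y))
    (hXdef : ∀ (k : ℤ) (y : Fin n → ℝ), X k y = deriv (fun s => h s k y) 0) :
    (∀ (k : ℤ) (y : Fin (m+1) → Fin n → ℝ), ∃ ε > (0:ℝ), ∀ s : ℝ, |s| < ε →
        L k (fun j => h s (k + (j.val : ℤ)) (y j)) = L k y)
    ↔ (∀ (k : ℤ) (y : Fin (m+1) → Fin n → ℝ),
        (∑ j : Fin (m+1),
          fderiv ℝ (L k) y (Pi.single j (X (k + (j.val : ℤ)) (y j)))) = 0) := by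
  have hLd : ∀ k, Differentiable ℝ (L k) := fun k => (hL k).differentiable one_ne_zero
  -- derivative of F s = L k (g s)
  have key : ∀ (k : ℤ) (y : Fin (m+1) → Fin n → ℝ) (s : ℝ),
      HasDerivAt (fun s => L k (fun j => h s (k + (j.val : ℤ)) (y j)))
        (∑ j : Fin (m+1),
          fderiv ℝ (L k) (fun j => h s (k + (j.val : ℤ)) (y j))
            (Pi.single j (X (k + (j.val : ℤ)) (h s (k + (j.val : ℤ)) (y j))))) s := by
    intro k y s
    set g : ℝ → Fin (m+1) → Fin n → ℝ := fun s j => h s (k + (j.val : ℤ)) (y j) with hg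
    have hgd : HasDerivAt g (fun j => X (k + (j.val : ℤ)) (g s j)) s := by
      rw [hasDerivAt_pi]
      intro j
      have := (hdiff (k + (j.val : ℤ)) (y j)) s
      have := this.hasDerivAt
      rwa [hgrp s (k + (j.val : ℤ)) (y j)] at this
    have hF : HasFDerivAt (L k) (fderiv ℝ (L k) (g s)) (g s) :=
      (hLd k (g s)).hasFDerivAt
    have := hF.comp_hasDerivAt s hgd
    have hsum : fderiv ℝ (L k) (g s) (fun j => X (k + (j.val : ℤ)) (g s j))
        = ∑ j : Fin (m+1),
          fderiv ℝ (L k) (g s) (Pi.single j (X (k + (j.val : ℤ)) (g s j))) := by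
      rw [← map_sum]
      congr 1
      exact (Finset.univ_sum_single (fun j => X (k + (j.val : ℤ)) (g s j))).symm
    rw [hsum] at this
    exact this
  constructor
  · intro hinv k y
    obtain ⟨ε, hε, hloc⟩ := hinv k y
    have heq : (fun s => L k (fun j => h s (k + (j.val : ℤ)) (y j)))
        =ᶠ[nhds (0:ℝ)] (fun _ => L k y) := by
      filter_upwards [Metric.ball_mem_nhds (0:ℝ) hε] with s hs
      exact hloc s (by simpa [Real.dist_eq] using hs)
    have hd0 := (key k y 0).deriv
    rw [heq.deriv_eq] at hd0
    simp only [deriv_const] at hd0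
    have : (fun j => h 0 (k + (j.val : ℤ)) (y j)) = y := by
      funext j; exact hgrp0 _ _
    rw [this] at hd0
    simp only [hgrp0] at hd0
    exact hd0.symm
  · intro hcond k y
    refine ⟨1, one_pos, fun s _ => ?_⟩
    set F : ℝ → ℝ := fun s => L k (fun j => h s (k + (j.val : ℤ)) (y j)) with hF
    have hFd : Differentiable ℝ F := fun s => (key k y s).differentiableAt
    have hFz : ∀ s, deriv F s = 0 := by
      intro s
      rw [(key k y s).deriv]
      exact hcond k (fun j => h s (k + (j.val : ℤ)) (y j))
    have := is_const_of_deriv_eq_zero hFd hFz s 0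
    have h0 : F 0 = L k y := by
      simp only [hF]
      congr 1
      funext j; exact hgrp0 _ _
    rw [← h0]; exact this
end

section
/- Let n ≥ 1, m ≥ 2, and let L : ℤ × (ℝⁿ)^{m+1} → ℝ, written L(k, y₀, y₁, …, y_m), be continuously differentiable in its vector arguments. Let X : ℤ × ℝⁿ → ℝⁿ satisfy, for every k ∈ ℤ and every (y₀,…,y_m) ∈ (ℝⁿ)^{m+1}: Σ_{j=0}^{m} ∇_{y_j}L(k, y₀, …, y_m)·X(k+j, y_j) = 0. Then every sequence x : ℤ → ℝⁿ satisfying the discrete Euler–Lagrange equation Σ_{j=0}^{m} ∇_{y_j}L(k+m−j, x(k+m−j), …, x(k+2m−j)) = 0 for all k ∈ ℤ also satisfies: the function k ↦ Σ_{j=0}^{m−1} Ψ^j(k)·X(k+j, x(k+j)) is constant on ℤ, where Ψ⁰(k) = ∇_{y₀}L(k, x(k), …, x(k+m)) and Ψ^j(k) = Ψ^{j−1}(k+1) + ∇_{y_j}L(k, x(k), …, x(k+m)) for j = 1, 2, …, m−1. -/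
open Fin.NatCast in
/-- `PsiAux n m L x j w k` is the inner product `Ψʲ(k)·w` of the quantity `Ψʲ(k)`
of the discrete Noether theorem (Theorem 4) with a fixed vector `w`, defined by
`Ψ⁰(k) = ∇_{y₀}L(k, x(k), …, x(k+m))` and
`Ψʲ(k) = Ψ^{j−1}(k+1) + ∇_{y_j}L(k, x(k), …, x(k+m))`. -/
noncomputable def PsiAux (n m : ℕ) (L : ℤ → (Fin (m+1) → Fin n → ℝ) → ℝ)
    (x : ℤ → Fin n → ℝ) : ℕ → (Fin n → ℝ) → ℤ → ℝ
  | 0 => fun w k =>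
      fderiv ℝ (L k) (fun r => x (k + (r.val : ℤ))) (Pi.single 0 w)
  | (j+1) => fun w k => PsiAux n m L x j w (k+1)
      + fderiv ℝ (L k) (fun r => x (k + (r.val : ℤ)))
          (Pi.single (((j+1 : ℕ) : Fin (m+1))) w)

open Fin.NatCast in
/-- Auxiliary term: `∇_{y_i}L(t, x(t), …, x(t+m))·w`. -/
noncomputable def Aterm (n m : ℕ) (L : ℤ → (Fin (m+1) → Fin n → ℝ) → ℝ)
    (x : ℤ → Fin n → ℝ) (t : ℤ) (i : ℕ) (w : Fin n → ℝ) : ℝ :=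
  fderiv ℝ (L t) (fun r => x (t + (r.val : ℤ))) (Pi.single ((i : Fin (m+1))) w)

lemma psiAux_eq (n m : ℕ) (L : ℤ → (Fin (m+1) → Fin n → ℝ) → ℝ)
    (x : ℤ → Fin n → ℝ) (j : ℕ) (w : Fin n → ℝ) (k : ℤ) :
    PsiAux n m L x j w k
      = ∑ i ∈ Finset.range (j+1), Aterm n m L x (k + j - i) i w := by
  induction j generalizing k with
  | zero => simp [PsiAux, Aterm]
  | succ j ih =>
    rw [Finset.sum_range_succ]
    have h1 : (k : ℤ) + ((j:ℕ)+1 : ℕ) - ((j:ℕ)+1 : ℕ) = k := by push_cast; ring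
    show PsiAux n m L x j w (k+1) + _ = _
    rw [ih (k+1)]
    have h2 : ∀ i ∈ Finset.range (j+1),
        Aterm n m L x (k + 1 + j - i) i w = Aterm n m L x (k + ((j:ℕ)+1:ℕ) - i) i w := by
      intro i _
      congr 1
      push_cast; ring
    rw [Finset.sum_congr rfl h2, h1]
    rfl

/-- Discrete-time Noether theorem for higher-order problems (Theorem 4). -/
theorem stmt_6 (n m : ℕ) (hn : 1 ≤ n) (hm : 2 ≤ m)
    (L : ℤ → (Fin (m+1) → Fin n → ℝ) → ℝ)
    (hL : ∀ k : ℤ, ContDiff ℝ 1 (L k))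
    (X : ℤ → (Fin n → ℝ) → (Fin n → ℝ))
    (hsym : ∀ (k : ℤ) (y : Fin (m+1) → Fin n → ℝ),
      (∑ j : Fin (m+1),
        fderiv ℝ (L k) y (Pi.single j (X (k + (j.val : ℤ)) (y j)))) = 0)
    (x : ℤ → Fin n → ℝ)
    (hEL : ∀ (k : ℤ) (w : Fin n → ℝ),
      (∑ j : Fin (m+1),
        fderiv ℝ (L (k + m - (j.val : ℤ)))
          (fun r => x (k + m - (j.val : ℤ) + (r.val : ℤ)))
          (Pi.single j w)) = 0) :
    ∃ c : ℝ, ∀ k : ℤ,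
      (∑ j ∈ Finset.range m,
        PsiAux n m L x j (X (k + (j : ℤ)) (x (k + (j : ℤ)))) k) = c := by
  set B : ℤ → (Fin n → ℝ) := fun t => X t (x t) with hB
  set F : ℤ → ℝ := fun k =>
    ∑ j ∈ Finset.range m, PsiAux n m L x j (X (k + (j : ℤ)) (x (k + (j : ℤ)))) k with hF
  -- Euler–Lagrange in range form
  have el : ∀ (k : ℤ) (w : Fin n → ℝ),
      ∑ i ∈ Finset.range (m+1), Aterm n m L x (k + m - i) i w = 0 := by
    intro k w
    have h := hEL k w
    rw [← Fin.sum_univ_eq_sum_range (fun i => Aterm n m L x (k + m - i) i w) (m+1)]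
    rw [← h]
    apply Finset.sum_congr rfl
    intro j _
    simp [Aterm]
  -- symmetry condition in range form
  have sym : ∀ k : ℤ,
      ∑ i ∈ Finset.range (m+1), Aterm n m L x k i (B (k + i)) = 0 := by
    intro k
    have h := hsym k (fun r => x (k + (r.val : ℤ)))
    rw [← Fin.sum_univ_eq_sum_range (fun i => Aterm n m L x k i (B (k + i))) (m+1)]
    rw [← h]
    apply Finset.sum_congr rfl
    intro j _
    simp [Aterm, hB]
  -- the key step: F (k+1) = F k
  have key : ∀ k : ℤ, F (k + 1) = F k := by
    intro k
    set S : ℕ → ℝ := fun j =>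
      ∑ i ∈ Finset.range j, Aterm n m L x (k + j - i) i (B (k + j)) with hS
    have hF1 : F (k + 1) = ∑ j ∈ Finset.range m, S (j + 1) := by
      rw [hF]
      apply Finset.sum_congr rfl
      intro j _
      rw [psiAux_eq]
      rw [hS]
      apply Finset.sum_congr rfl
      intro i _
      have e1 : (k : ℤ) + 1 + (j : ℤ) = k + ((j+1 : ℕ) : ℤ) := by push_cast; ring
      have : X (k + 1 + (j : ℤ)) (x (k + 1 + (j : ℤ))) = B (k + ((j+1:ℕ) : ℤ)) := by
        rw [hB, e1]
      rw [this]
      congr 1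
      push_cast; ring
    have hF0 : F k = ∑ j ∈ Finset.range m,
        (S j + Aterm n m L x k j (B (k + j))) := by
      rw [hF]
      apply Finset.sum_congr rfl
      intro j _
      rw [psiAux_eq, Finset.sum_range_succ]
      have e0 : (k : ℤ) + (j:ℤ) - (j:ℤ) = k := by ring
      rw [e0]
    have tel : ∑ j ∈ Finset.range m, (S (j+1) - S j) = S m - S 0 :=
      Finset.sum_range_sub S m
    have hS0 : S 0 = 0 := by simp [hS]
    -- S m via Euler–Lagrange
    have hSm : S m = - Aterm n m L x k m (B (k + m)) := by
      have h := el k (B (k + m))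
      rw [Finset.sum_range_succ] at h
      have e : (k : ℤ) + (m:ℤ) - (m:ℤ) = k := by ring
      rw [e] at h
      rw [hS]
      linarith
    -- symmetry sum
    have hsymm : ∑ j ∈ Finset.range m, Aterm n m L x k j (B (k + j))
        = - Aterm n m L x k m (B (k + m)) := by
      have h := sym k
      rw [Finset.sum_range_succ] at h
      linarith
    have : F (k+1) - F k = S m - S 0 - ∑ j ∈ Finset.range m,
        Aterm n m L x k j (B (k + j)) := by
      rw [hF1, hF0, ← tel, Finset.sum_sub_distrib, Finset.sum_add_distrib]
      ring
    have hzero : F (k+1) - F k = 0 := by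
      rw [this, hSm, hS0, hsymm]; ring
    linarith
  refine ⟨F 0, fun k => ?_⟩
  show F k = F 0
  induction k using Int.induction_on with
  | zero => rfl
  | succ i ih => rw [key i, ih]
  | pred i ih =>
    have := key (-(i:ℤ) - 1)
    simp only [sub_add_cancel] at this
    rw [← this, ih]
end

section
/- Let n ≥ 1 and let L : ℤ × ℝⁿ × ℝⁿ → ℝ, written L(k, y₀, y₁), be continuously differentiable in (y₀,y₁) for each k. Let X : ℤ × ℝⁿ → ℝⁿ satisfy, for every k ∈ ℤ and all y₀, y₁ ∈ ℝⁿ: ∇_{y₀}L(k, y₀, y₁)·X(k, y₀) + ∇_{y₁}L(k, y₀, y₁)·X(k+1, y₁) = 0. Then every sequence x : ℤ → ℝⁿ satisfying the discrete Euler–Lagrange equation ∇_{y₀}L(k+1, x(k+1), x(k+2)) + ∇_{y₁}L(k, x(k), x(k+1)) = 0 for all k ∈ ℤ also satisfies: the function k ↦ ∇_{y₀}L(k, x(k), x(k+1))·X(k, x(k)) is constant on ℤ. -/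
/-- Discrete-time Noether theorem, first-order case (m = 1). -/
theorem stmt_7 (n : ℕ) (hn : 1 ≤ n)
    (L : ℤ → (Fin n → ℝ) → (Fin n → ℝ) → ℝ)
    (hL : ∀ k : ℤ, ContDiff ℝ 1 (fun p : (Fin n → ℝ) × (Fin n → ℝ) => L k p.1 p.2))
    (X : ℤ → (Fin n → ℝ) → (Fin n → ℝ))
    (hsym : ∀ (k : ℤ) (y₀ y₁ : Fin n → ℝ),
      fderiv ℝ (fun y => L k y y₁) y₀ (X k y₀)
        + fderiv ℝ (fun y => L k y₀ y) y₁ (X (k+1) y₁) = 0)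
    (x : ℤ → Fin n → ℝ)
    (hEL : ∀ (k : ℤ) (w : Fin n → ℝ),
      fderiv ℝ (fun y => L (k+1) y (x (k+2))) (x (k+1)) w
        + fderiv ℝ (fun y => L k (x k) y) (x (k+1)) w = 0) :
    ∃ c : ℝ, ∀ k : ℤ,
      fderiv ℝ (fun y => L k y (x (k+1))) (x k) (X k (x k)) = c := by
  set f : ℤ → ℝ := fun k => fderiv ℝ (fun y => L k y (x (k+1))) (x k) (X k (x k)) with hf
  have step : ∀ k : ℤ, f (k + 1) = f k := by
    intro k
    have h1 := hsym k (x k) (x (k + 1))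
    have h2 := hEL k (X (k + 1) (x (k + 1)))
    have hk : k + 2 = (k + 1) + 1 := by ring
    simp only [hf]
    rw [show k + 1 + 1 = k + 2 from by ring]
    linarith [h1, h2]
  refine ⟨f 0, fun k => ?_⟩
  have : ∀ k : ℤ, f k = f 0 := by
    intro k
    induction k using Int.induction_on with
    | zero => rfl
    | succ i ih => rw [step i, ih]
    | pred i ih =>
        have := step (-(i:ℤ) - 1)
        rw [show -(i:ℤ) - 1 + 1 = -(i:ℤ) from by ring] at this
        rw [← this]; exact ih
  exact this k
end

section
/- Consider the Lagrangian L(t,x,v) = t·v². Let T, X : (0,∞) × ℝ → ℝ be continuously differentiable. Then T and X satisfy the variational-symmetry identity v²·T(t,x) + 2t·v·(∂X/∂t(t,x) + ∂X/∂x(t,x)·v − v·(∂T/∂t(t,x) + ∂T/∂x(t,x)·v)) + t·v²·(∂T/∂t(t,x) + ∂T/∂x(t,x)·v) = 0 for all t > 0, x ∈ ℝ, v ∈ ℝ, if and only if there exist constants C₁, C₂, C₃ such that T(t,x) = (2·C₁·ln t + C₃)·t and X(t,x) = C₁·x + C₂ for all t > 0, x ∈ ℝ. -/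
lemma const_on_Ioi {f : ℝ → ℝ}
    (hd : ∀ x ∈ Set.Ioi (0:ℝ), DifferentiableAt ℝ f x)
    (h0 : ∀ x ∈ Set.Ioi (0:ℝ), deriv f x = 0)
    {a b : ℝ} (ha : a ∈ Set.Ioi (0:ℝ)) (hb : b ∈ Set.Ioi (0:ℝ)) : f a = f b := by
  refine (convex_Ioi (0:ℝ)).is_const_of_fderivWithin_eq_zero
    (fun x hx => (hd x hx).differentiableWithinAt) (fun x hx => ?_) ha hb
  rw [fderivWithin_of_isOpen isOpen_Ioi hx]
  have h1 := (hd x hx).hasDerivAt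
  rw [h0 x hx] at h1
  rw [h1.hasFDerivAt.fderiv]; ext; simp

/-- partial differentiability in the first variable -/
lemma pdiff1 {F : ℝ → ℝ → ℝ}
    (hF : ContDiffOn ℝ 1 (fun p : ℝ × ℝ => F p.1 p.2) (Set.Ioi 0 ×ˢ Set.univ))
    {t x : ℝ} (ht : t ∈ Set.Ioi (0:ℝ)) : DifferentiableAt ℝ (fun u => F u x) t := by
  have hopen : IsOpen (Set.Ioi (0:ℝ) ×ˢ (Set.univ : Set ℝ)) := isOpen_Ioi.prod isOpen_univ
  have hd : DifferentiableAt ℝ (fun p : ℝ × ℝ => F p.1 p.2) (t, x) :=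
    (hF.differentiableOn one_ne_zero).differentiableAt (hopen.mem_nhds ⟨ht, trivial⟩)
  exact hd.comp t (DifferentiableAt.prodMk (differentiableAt_id : DifferentiableAt ℝ id t) (differentiableAt_const x))

lemma pdiff2 {F : ℝ → ℝ → ℝ}
    (hF : ContDiffOn ℝ 1 (fun p : ℝ × ℝ => F p.1 p.2) (Set.Ioi 0 ×ˢ Set.univ))
    {t x : ℝ} (ht : t ∈ Set.Ioi (0:ℝ)) : DifferentiableAt ℝ (fun y => F t y) x := by
  have hopen : IsOpen (Set.Ioi (0:ℝ) ×ˢ (Set.univ : Set ℝ)) := isOpen_Ioi.prod isOpen_univ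
  have hd : DifferentiableAt ℝ (fun p : ℝ × ℝ => F p.1 p.2) (t, x) :=
    (hF.differentiableOn one_ne_zero).differentiableAt (hopen.mem_nhds ⟨ht, trivial⟩)
  exact hd.comp x (DifferentiableAt.prodMk (differentiableAt_const t) differentiableAt_id)

/-- Example 1: the variational symmetries of the Lagrangian `L(t,x,v) = t·v²`
are exactly `T(t,x) = (2C₁·ln t + C₃)·t`, `X(t,x) = C₁·x + C₂`. -/
theorem stmt_9 (T X : ℝ → ℝ → ℝ)
    (hT : ContDiffOn ℝ 1 (fun p : ℝ × ℝ => T p.1 p.2) (Set.Ioi 0 ×ˢ Set.univ))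
    (hX : ContDiffOn ℝ 1 (fun p : ℝ × ℝ => X p.1 p.2) (Set.Ioi 0 ×ˢ Set.univ)) :
    (∀ t > (0:ℝ), ∀ x v : ℝ,
        v ^ 2 * T t x
        + 2 * t * v * (deriv (fun u => X u x) t + deriv (fun y => X t y) x * v
            - v * (deriv (fun u => T u x) t + deriv (fun y => T t y) x * v))
        + t * v ^ 2 * (deriv (fun u => T u x) t + deriv (fun y => T t y) x * v) = 0)
    ↔ (∃ C₁ C₂ C₃ : ℝ, ∀ t > (0:ℝ), ∀ x : ℝ,
        T t x = (2 * C₁ * Real.log t + C₃) * t ∧ X t x = C₁ * x + C₂) := by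
  constructor
  · intro h
    -- Coefficient extraction
    have key : ∀ t > (0:ℝ), ∀ x : ℝ,
        deriv (fun u => X u x) t = 0 ∧ deriv (fun y => T t y) x = 0 ∧
        T t x + 2 * t * deriv (fun y => X t y) x - t * deriv (fun u => T u x) t = 0 := by
      intro t ht x
      have h1 := h t ht x 1
      have h2 := h t ht x (-1)
      have h3 := h t ht x 2
      set a := deriv (fun u => X u x) t
      set b := deriv (fun y => X t y) x
      set c := deriv (fun u => T u x) t
      set d := deriv (fun y => T t y) x
      have e1 : 2*t*a + (T t x + 2*t*b - t*c) + (-(t*d)) = 0 := by ring_nf; ring_nf at h1; linarith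
      have e2 : -(2*t*a) + (T t x + 2*t*b - t*c) - (-(t*d)) = 0 := by ring_nf; ring_nf at h2; linarith
      have e3 : 2*(2*t*a) + 4*(T t x + 2*t*b - t*c) + 8*(-(t*d)) = 0 := by ring_nf; ring_nf at h3; linarith
      have ht' : t ≠ 0 := ne_of_gt ht
      have ha : a = 0 := by
        have : 2*t*a = 0 := by linarith
        have := mul_eq_zero.mp this
        rcases this with h' | h'
        · exact absurd h' (by positivity)
        · exact h'
      have hd : d = 0 := by
        have : t*d = 0 := by linarith
        rcases mul_eq_zero.mp this with h' | h'
        · exact absurd h' ht'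
        · exact h'
      exact ⟨ha, hd, by linarith⟩
    -- T independent of x
    have hTconst : ∀ t > (0:ℝ), ∀ x : ℝ, T t x = T t 0 := by
      intro t ht x
      exact is_const_of_deriv_eq_zero (fun y => pdiff2 hT ht) (fun y => (key t ht y).2.1) x 0
    -- X independent of t
    have hXconst : ∀ t > (0:ℝ), ∀ x : ℝ, X t x = X 1 x := by
      intro t ht x
      exact const_on_Ioi (fun u hu => pdiff1 hX hu) (fun u hu => (key u hu x).1) ht (by norm_num)
    set f : ℝ → ℝ := fun t => T t 0 with hf
    set g : ℝ → ℝ := fun x => X 1 x with hg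
    -- deriv of u ↦ T u x equals deriv f
    have hderT : ∀ t > (0:ℝ), ∀ x : ℝ, deriv (fun u => T u x) t = deriv f t := by
      intro t ht x
      apply Filter.EventuallyEq.deriv_eq
      filter_upwards [isOpen_Ioi.mem_nhds ht] with u hu
      exact hTconst u hu x
    have hderX : ∀ t > (0:ℝ), ∀ x : ℝ, deriv (fun y => X t y) x = deriv g x := by
      intro t ht x
      have : (fun y => X t y) = g := funext fun y => hXconst t ht y
      rw [this]
    have key2 : ∀ t > (0:ℝ), ∀ x : ℝ, f t + 2*t*deriv g x - t * deriv f t = 0 := by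
      intro t ht x
      have := (key t ht x).2.2
      rw [hderT t ht x, hderX t ht x, hTconst t ht x] at this
      exact this
    set C₁ := deriv g 0 with hC₁
    have hgder : ∀ x : ℝ, deriv g x = C₁ := by
      intro x
      have e1 := key2 1 one_pos x
      have e2 := key2 1 one_pos 0
      rw [hC₁]; linarith
    -- g is affine
    have hgdiff : ∀ x : ℝ, DifferentiableAt ℝ g x := fun x => pdiff2 hX (by norm_num)
    have hgaffine : ∀ x : ℝ, g x = C₁ * x + g 0 := by
      intro x
      have hc : ∀ y : ℝ, deriv (fun z => g z - C₁ * z) y = 0 := by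
        intro y
        rw [deriv_fun_sub (hgdiff y) (by fun_prop)]
        rw [hgder y]
        have hd : deriv (fun z : ℝ => C₁ * z) y = C₁ := by
          simpa using ((hasDerivAt_id y).const_mul C₁).deriv
        rw [hd, sub_self]
      have := is_const_of_deriv_eq_zero
        (fun y => (hgdiff y).sub (by fun_prop)) hc x 0
      have h0 : C₁ * (0:ℝ) = 0 := mul_zero C₁
      simp only [Pi.sub_apply] at this
      linarith
    -- ODE for f
    have hfdiff : ∀ t ∈ Set.Ioi (0:ℝ), DifferentiableAt ℝ f t := fun t ht => pdiff1 hT ht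
    set F : ℝ → ℝ := fun t => f t / t - 2*C₁*Real.log t with hF
    have hFder : ∀ t ∈ Set.Ioi (0:ℝ), HasDerivAt F 0 t := by
      intro t ht
      have ht' : (t:ℝ) ≠ 0 := ne_of_gt ht
      have h1 : HasDerivAt (fun u => f u / u) ((deriv f t * t - f t * 1)/t^2) t :=
        ((hfdiff t ht).hasDerivAt).div (hasDerivAt_id t) ht'
      have h2 : HasDerivAt (fun u => 2*C₁*Real.log u) (2*C₁*t⁻¹) t :=
        (Real.hasDerivAt_log ht').const_mul (2*C₁)
      have h3 := h1.sub h2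
      have heq : (deriv f t * t - f t * 1)/t^2 - 2*C₁*t⁻¹ = 0 := by
        have := key2 t ht 0
        rw [← hC₁] at this
        have h4 : (f t + 2*t*C₁ - t*deriv f t) * t = 0 := by rw [this]; ring
        field_simp
        linarith [h4]
      rw [heq] at h3
      exact h3
    have hFconst : ∀ t ∈ Set.Ioi (0:ℝ), F t = F 1 := by
      intro t ht
      exact const_on_Ioi (fun u hu => (hFder u hu).differentiableAt)
        (fun u hu => (hFder u hu).deriv) ht (by norm_num)
    refine ⟨C₁, g 0, F 1, ?_⟩
    intro t ht x
    constructor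
    · have hFt := hFconst t ht
      have ht' : (t:ℝ) ≠ 0 := ne_of_gt ht
      rw [hTconst t ht x]
      show f t = (2 * C₁ * Real.log t + F 1) * t
      have hF1 : F 1 = f 1 := by simp [hF]
      rw [hF1]
      rw [hF] at hFt
      simp only at hFt
      field_simp at hFt
      rw [Real.log_one] at hFt
      nlinarith [hFt]
    · rw [hXconst t ht x]
      exact hgaffine x
  · rintro ⟨C₁, C₂, C₃, hC⟩
    intro t ht x v
    have ht' : (t:ℝ) ≠ 0 := ne_of_gt ht
    have dXx : deriv (fun y => X t y) x = C₁ := by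
      have : (fun y => X t y) = fun y => C₁ * y + C₂ := funext fun y => (hC t ht y).2
      rw [this]
      have : HasDerivAt (fun y : ℝ => C₁ * y + C₂) C₁ x := by
        simpa using (((hasDerivAt_id x).const_mul C₁).add_const C₂)
      exact this.deriv
    have dXt : deriv (fun u => X u x) t = 0 := by
      have : deriv (fun u => X u x) t = deriv (fun _ : ℝ => C₁ * x + C₂) t := by
        apply Filter.EventuallyEq.deriv_eq
        filter_upwards [isOpen_Ioi.mem_nhds ht] with u hu
        exact (hC u hu x).2
      rw [this, deriv_const]
    have dTx : deriv (fun y => T t y) x = 0 := by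
      have : (fun y => T t y) = fun _ : ℝ => (2 * C₁ * Real.log t + C₃) * t :=
        funext fun y => (hC t ht y).1
      rw [this, deriv_const]
    have dTt : deriv (fun u => T u x) t = 2 * C₁ * Real.log t + 2 * C₁ + C₃ := by
      have h1 : deriv (fun u => T u x) t
          = deriv (fun u : ℝ => (2 * C₁ * Real.log u + C₃) * u) t := by
        apply Filter.EventuallyEq.deriv_eq
        filter_upwards [isOpen_Ioi.mem_nhds ht] with u hu
        exact (hC u hu x).1
      have h2 : HasDerivAt (fun u : ℝ => (2 * C₁ * Real.log u + C₃) * u)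
          ((2 * C₁ * t⁻¹) * t + (2 * C₁ * Real.log t + C₃) * 1) t :=
        (((Real.hasDerivAt_log ht').const_mul (2*C₁)).add_const C₃).mul (hasDerivAt_id t)
      rw [h1, h2.deriv]
      field_simp
      ring
    rw [dXx, dXt, dTx, dTt, (hC t ht x).1]
    ring
end

section
/- Let x : (0,∞) → ℝ be twice differentiable and satisfy the Euler–Lagrange equation x'(t) + t·x''(t) = 0 for all t > 0 (the Euler–Lagrange equation of the Lagrangian L(t,x,v) = t·v²). Then the function t ↦ x(t)·t·x'(t) − t²·(x'(t))²·ln t is constant on (0,∞). -/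
/-- Conservation law for the Lagrangian `L(t,x,v) = t·v²` (Example 1):
along solutions of `x' + t·x'' = 0` on `(0,∞)`, the quantity
`x·t·x' − t²·(x')²·ln t` is constant. -/
theorem stmt_10 (x : ℝ → ℝ)
    (hx : ∀ t ∈ Set.Ioi (0:ℝ), DifferentiableAt ℝ x t)
    (hx' : ∀ t ∈ Set.Ioi (0:ℝ), DifferentiableAt ℝ (deriv x) t)
    (hode : ∀ t ∈ Set.Ioi (0:ℝ), deriv x t + t * deriv (deriv x) t = 0) :
    ∃ c : ℝ, ∀ t ∈ Set.Ioi (0:ℝ),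
      x t * t * deriv x t - t ^ 2 * (deriv x t) ^ 2 * Real.log t = c := by
  set F : ℝ → ℝ := fun t => x t * t * deriv x t - t ^ 2 * (deriv x t) ^ 2 * Real.log t with hF
  have key : ∀ t ∈ Set.Ioi (0:ℝ), HasDerivAt F 0 t := by
    intro t ht
    have ht0 : (0:ℝ) < t := ht
    set u := x t
    set u' := deriv x t
    set u'' := deriv (deriv x) t
    have hx1 : HasDerivAt x u' t := (hx t ht).hasDerivAt
    have hx2 : HasDerivAt (deriv x) u'' t := (hx' t ht).hasDerivAt
    have hid : HasDerivAt (fun s : ℝ => s) 1 t := hasDerivAt_id t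
    have h1 : HasDerivAt (fun s => x s * s * deriv x s)
        ((u' * t + u * 1) * u' + (u * t) * u'') t := (hx1.mul hid).mul hx2
    have hsq : HasDerivAt (fun s => (deriv x s) ^ 2) ((2:ℕ) * u' ^ 1 * u'') t := hx2.pow 2
    have hpow : HasDerivAt (fun s : ℝ => s ^ 2) ((2:ℕ) * t ^ 1) t := hasDerivAt_pow 2 t
    have hlog : HasDerivAt Real.log t⁻¹ t := Real.hasDerivAt_log (ne_of_gt ht0)
    have h2 : HasDerivAt (fun s => s ^ 2 * (deriv x s) ^ 2 * Real.log s)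
        (((2:ℕ) * t ^ 1 * u' ^ 2 + t ^ 2 * ((2:ℕ) * u' ^ 1 * u'')) * Real.log t
          + t ^ 2 * u' ^ 2 * t⁻¹) t := (hpow.mul hsq).mul hlog
    have h := h1.sub h2
    refine h.congr_deriv ?_
    symm
    have hode' := hode t ht
    have hti : t ^ 2 * u' ^ 2 * t⁻¹ = t * u' ^ 2 := by
      field_simp
    rw [hti]
    push_cast
    linear_combination (2 * t * Real.log t * u' - u) * hode'
  have hconv : Convex ℝ (Set.Ioi (0:ℝ)) := convex_Ioi 0
  have hdiff : DifferentiableOn ℝ F (Set.Ioi (0:ℝ)) :=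
    fun t ht => ((key t ht).differentiableAt).differentiableWithinAt
  have hone : (1:ℝ) ∈ Set.Ioi (0:ℝ) := by norm_num
  refine ⟨F 1, fun t ht => ?_⟩
  refine hconv.is_const_of_fderivWithin_eq_zero hdiff (fun z hz => ?_) ht hone
  rw [fderivWithin_of_isOpen isOpen_Ioi hz, (key z hz).hasFDerivAt.fderiv]
  ext
  simp
end

section
/- Let x₁, x₂ : ℝ → ℝ with x₁ twice differentiable and x₂ four times differentiable, satisfying x₁''(t) = 0 and x₂''''(t) = 0 for all t ∈ ℝ (the Euler–Lagrange equations of the Lagrangian L = (x₁')² + (x₂'')²). Then for all real constants C₁, C₂, C₃, C₄, C₅, the function t ↦ 2·((1/2)·C₁·x₁(t) + C₅)·x₁'(t) − 2·((3/2)·C₁·x₂(t) + C₃·t + C₄)·x₂'''(t) + 2·(C₃ + (1/2)·C₁·x₂'(t))·x₂''(t) + (−(x₁'(t))² − (x₂''(t))² + 2·x₂'(t)·x₂'''(t))·(C₁·t + C₂) is constant on ℝ. -/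
/-- Conservation law for the second-order Lagrangian `L = (x₁')² + (x₂'')²`
(Example 3), along solutions of `x₁'' = 0`, `x₂'''' = 0`. -/
theorem stmt_12 (x₁ x₂ : ℝ → ℝ)
    (hx₁ : Differentiable ℝ x₁) (hx₁' : Differentiable ℝ (deriv x₁))
    (hx₂ : ∀ k < 4, Differentiable ℝ (iteratedDeriv k x₂))
    (hode₁ : ∀ t : ℝ, deriv (deriv x₁) t = 0)
    (hode₂ : ∀ t : ℝ, iteratedDeriv 4 x₂ t = 0) :
    ∀ C₁ C₂ C₃ C₄ C₅ : ℝ, ∃ c : ℝ, ∀ t : ℝ,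
      2 * ((1/2) * C₁ * x₁ t + C₅) * deriv x₁ t
        - 2 * ((3/2) * C₁ * x₂ t + C₃ * t + C₄) * iteratedDeriv 3 x₂ t
        + 2 * (C₃ + (1/2) * C₁ * deriv x₂ t) * iteratedDeriv 2 x₂ t
        + (-(deriv x₁ t) ^ 2 - (iteratedDeriv 2 x₂ t) ^ 2
            + 2 * deriv x₂ t * iteratedDeriv 3 x₂ t) * (C₁ * t + C₂) = c := by
  intro C₁ C₂ C₃ C₄ C₅
  set F : ℝ → ℝ := fun t =>
      2 * ((1/2) * C₁ * x₁ t + C₅) * deriv x₁ t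
        - 2 * ((3/2) * C₁ * x₂ t + C₃ * t + C₄) * iteratedDeriv 3 x₂ t
        + 2 * (C₃ + (1/2) * C₁ * deriv x₂ t) * iteratedDeriv 2 x₂ t
        + (-(deriv x₁ t) ^ 2 - (iteratedDeriv 2 x₂ t) ^ 2
            + 2 * deriv x₂ t * iteratedDeriv 3 x₂ t) * (C₁ * t + C₂) with hFdef
  have hF : ∀ t : ℝ, HasDerivAt F 0 t := by
    intro t
    have e2 : iteratedDeriv 2 x₂ = deriv (iteratedDeriv 1 x₂) := iteratedDeriv_succ
    have e3 : iteratedDeriv 3 x₂ = deriv (iteratedDeriv 2 x₂) := iteratedDeriv_succ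
    have e4 : iteratedDeriv 4 x₂ = deriv (iteratedDeriv 3 x₂) := iteratedDeriv_succ
    have h0 : HasDerivAt x₂ (deriv x₂ t) t := by
      simpa [iteratedDeriv_zero] using ((hx₂ 0 (by norm_num)) t).hasDerivAt
    have h1 : HasDerivAt (deriv x₂) (iteratedDeriv 2 x₂ t) t := by
      have := ((hx₂ 1 (by norm_num)) t).hasDerivAt
      rw [e2]
      simpa [iteratedDeriv_one] using this
    have h2 : HasDerivAt (iteratedDeriv 2 x₂) (iteratedDeriv 3 x₂ t) t := by
      have := ((hx₂ 2 (by norm_num)) t).hasDerivAt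
      rwa [← e3] at this
    have h3 : HasDerivAt (iteratedDeriv 3 x₂) 0 t := by
      have := ((hx₂ 3 (by norm_num)) t).hasDerivAt
      rwa [← e4, hode₂ t] at this
    have ha : HasDerivAt x₁ (deriv x₁ t) t := (hx₁ t).hasDerivAt
    have hb : HasDerivAt (deriv x₁) 0 t := by
      have := (hx₁' t).hasDerivAt
      rwa [hode₁ t] at this
    have hid : HasDerivAt (fun s : ℝ => s) 1 t := hasDerivAt_id t
    have hT1 : HasDerivAt (fun s => 2 * ((1/2) * C₁ * x₁ s + C₅) * deriv x₁ s)
        (2 * ((1/2) * C₁ * deriv x₁ t) * deriv x₁ t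
          + 2 * ((1/2) * C₁ * x₁ t + C₅) * 0) t := by
      exact (((ha.const_mul ((1:ℝ)/2 * C₁)).add_const C₅).const_mul 2).mul hb
    have hT2 : HasDerivAt (fun s => 2 * ((3/2) * C₁ * x₂ s + C₃ * s + C₄) * iteratedDeriv 3 x₂ s)
        (2 * ((3/2) * C₁ * deriv x₂ t + C₃) * iteratedDeriv 3 x₂ t
          + 2 * ((3/2) * C₁ * x₂ t + C₃ * t + C₄) * 0) t := by
      have : HasDerivAt (fun s => (3/2) * C₁ * x₂ s + C₃ * s + C₄)
          ((3/2) * C₁ * deriv x₂ t + C₃) t := by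
        simpa using ((h0.const_mul ((3:ℝ)/2 * C₁)).add (hid.const_mul C₃)).add_const C₄
      simpa [mul_comm, Pi.mul_def] using (this.const_mul 2).mul h3
    have hT3 : HasDerivAt (fun s => 2 * (C₃ + (1/2) * C₁ * deriv x₂ s) * iteratedDeriv 2 x₂ s)
        (2 * ((1/2) * C₁ * iteratedDeriv 2 x₂ t) * iteratedDeriv 2 x₂ t
          + 2 * (C₃ + (1/2) * C₁ * deriv x₂ t) * iteratedDeriv 3 x₂ t) t := by
      have : HasDerivAt (fun s => C₃ + (1/2) * C₁ * deriv x₂ s)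
          ((1/2) * C₁ * iteratedDeriv 2 x₂ t) t := by
        simpa using (h1.const_mul ((1:ℝ)/2 * C₁)).const_add C₃
      exact (this.const_mul 2).mul h2
    have hT4 : HasDerivAt (fun s => (-(deriv x₁ s) ^ 2 - (iteratedDeriv 2 x₂ s) ^ 2
          + 2 * deriv x₂ s * iteratedDeriv 3 x₂ s) * (C₁ * s + C₂))
        ((-(2 * deriv x₁ t * 0) - 2 * iteratedDeriv 2 x₂ t * iteratedDeriv 3 x₂ t
          + (2 * iteratedDeriv 2 x₂ t * iteratedDeriv 3 x₂ t + 2 * deriv x₂ t * 0))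
            * (C₁ * t + C₂)
          + (-(deriv x₁ t) ^ 2 - (iteratedDeriv 2 x₂ t) ^ 2
            + 2 * deriv x₂ t * iteratedDeriv 3 x₂ t) * C₁) t := by
      have hq1 : HasDerivAt (fun s => -(deriv x₁ s) ^ 2) (-(2 * deriv x₁ t * 0)) t := by
        simpa [Pi.neg_def, Pi.pow_def] using (hb.pow 2).neg
      have hq2 : HasDerivAt (fun s => (iteratedDeriv 2 x₂ s) ^ 2)
          (2 * iteratedDeriv 2 x₂ t * iteratedDeriv 3 x₂ t) t := by
        simpa [mul_comm, Pi.pow_def] using h2.pow 2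
      have hq3 : HasDerivAt (fun s => 2 * deriv x₂ s * iteratedDeriv 3 x₂ s)
          (2 * iteratedDeriv 2 x₂ t * iteratedDeriv 3 x₂ t + 2 * deriv x₂ t * 0) t := by
        exact (h1.const_mul 2).mul h3
      have hlin : HasDerivAt (fun s => C₁ * s + C₂) C₁ t := by
        simpa using (hid.const_mul C₁).add_const C₂
      exact ((hq1.sub hq2).add hq3).mul hlin
    have := ((hT1.sub hT2).add hT3).add hT4
    refine this.congr_deriv ?_
    ring
  refine ⟨F 0, fun t => ?_⟩
  have hdiff : Differentiable ℝ F := fun t => (hF t).differentiableAt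
  have := is_const_of_deriv_eq_zero hdiff (fun t => (hF t).deriv) t 0
  simpa [hFdef] using this
end

section
/- Consider the Emden–Fowler Lagrangian L(t,x,v) = (t²/2)·(v² − x⁶/3). Let T, X : (0,∞) × ℝ → ℝ be continuously differentiable. Then T and X satisfy the variational-symmetry identity t·(v² − x⁶/3)·T(t,x) − t²·x⁵·X(t,x) + t²·v·(∂X/∂t(t,x) + ∂X/∂x(t,x)·v − v·(∂T/∂t(t,x) + ∂T/∂x(t,x)·v)) + (t²/2)·(v² − x⁶/3)·(∂T/∂t(t,x) + ∂T/∂x(t,x)·v) = 0 for all t > 0, x ∈ ℝ, v ∈ ℝ, if and only if there exists a constant C₁ such that T(t,x) = C₁·t and X(t,x) = −C₁·x/2 for all t > 0, x ∈ ℝ. -/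
lemma aux_diffAt {F : ℝ → ℝ → ℝ}
    (hF : ContDiffOn ℝ 1 (fun p : ℝ × ℝ => F p.1 p.2) (Set.Ioi 0 ×ˢ Set.univ))
    {t x : ℝ} (ht : 0 < t) :
    DifferentiableAt ℝ (fun p : ℝ × ℝ => F p.1 p.2) (t, x) := by
  have hopen : IsOpen ((Set.Ioi (0:ℝ)) ×ˢ (Set.univ : Set ℝ)) := isOpen_Ioi.prod isOpen_univ
  have hmem : ((t, x) : ℝ × ℝ) ∈ (Set.Ioi (0:ℝ)) ×ˢ (Set.univ : Set ℝ) := ⟨ht, trivial⟩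
  exact ((hF.differentiableOn one_ne_zero) _ hmem).differentiableAt (hopen.mem_nhds hmem)

lemma aux_diffAt_x {F : ℝ → ℝ → ℝ}
    (hF : ContDiffOn ℝ 1 (fun p : ℝ × ℝ => F p.1 p.2) (Set.Ioi 0 ×ˢ Set.univ))
    {t x : ℝ} (ht : 0 < t) :
    DifferentiableAt ℝ (fun y => F t y) x := by
  have h1 := aux_diffAt hF (x := x) ht
  have h2 : DifferentiableAt ℝ (fun y : ℝ => ((t, y) : ℝ × ℝ)) x :=
    (differentiableAt_const t).prodMk differentiableAt_id
  exact h1.comp x h2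

lemma aux_diffAt_t {F : ℝ → ℝ → ℝ}
    (hF : ContDiffOn ℝ 1 (fun p : ℝ × ℝ => F p.1 p.2) (Set.Ioi 0 ×ˢ Set.univ))
    {t x : ℝ} (ht : 0 < t) :
    DifferentiableAt ℝ (fun u => F u x) t := by
  have h1 := aux_diffAt hF (x := x) ht
  have h2 : DifferentiableAt ℝ (fun u : ℝ => ((u, x) : ℝ × ℝ)) t :=
    differentiableAt_id.prodMk (differentiableAt_const x)
  exact h1.comp t h2

-- constancy in t on Ioi 0
lemma aux_const_t {g : ℝ → ℝ} (hd : ∀ t > (0:ℝ), DifferentiableAt ℝ g t)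
    (hz : ∀ t > (0:ℝ), deriv g t = 0) {t₁ t₂ : ℝ} (h1 : 0 < t₁) (h2 : 0 < t₂) :
    g t₁ = g t₂ := by
  have hconv : Convex ℝ (Set.Ioi (0:ℝ)) := convex_Ioi 0
  have hdon : DifferentiableOn ℝ g (Set.Ioi 0) := fun u hu => (hd u hu).differentiableWithinAt
  refine hconv.is_const_of_fderivWithin_eq_zero hdon (fun u hu => ?_) h1 h2
  rw [fderivWithin_of_isOpen isOpen_Ioi hu]
  ext
  simp [← toSpanSingleton_deriv, hz u hu]

/-- Example 4: the variational symmetries of the Emden–Fowler Lagrangian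
`L(t,x,v) = (t²/2)(v² − x⁶/3)` are exactly `T(t,x) = C₁·t`, `X(t,x) = −C₁·x/2`. -/
theorem stmt_13 (T X : ℝ → ℝ → ℝ)
    (hT : ContDiffOn ℝ 1 (fun p : ℝ × ℝ => T p.1 p.2) (Set.Ioi 0 ×ˢ Set.univ))
    (hX : ContDiffOn ℝ 1 (fun p : ℝ × ℝ => X p.1 p.2) (Set.Ioi 0 ×ˢ Set.univ)) :
    (∀ t > (0:ℝ), ∀ x v : ℝ,
        t * (v ^ 2 - x ^ 6 / 3) * T t x
        - t ^ 2 * x ^ 5 * X t x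
        + t ^ 2 * v * (deriv (fun u => X u x) t + deriv (fun y => X t y) x * v
            - v * (deriv (fun u => T u x) t + deriv (fun y => T t y) x * v))
        + (t ^ 2 / 2) * (v ^ 2 - x ^ 6 / 3)
            * (deriv (fun u => T u x) t + deriv (fun y => T t y) x * v) = 0)
    ↔ (∃ C₁ : ℝ, ∀ t > (0:ℝ), ∀ x : ℝ,
        T t x = C₁ * t ∧ X t x = -C₁ * x / 2) := by
  constructor
  · intro h
    -- coefficient extraction: for t>0, x:
    -- (cb) deriv (fun y => T t y) x = 0
    have cb : ∀ t > (0:ℝ), ∀ x : ℝ, deriv (fun y => T t y) x = 0 := by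
      intro t ht x
      have h0 := h t ht x 0
      have h1 := h t ht x 1
      have hm1 := h t ht x (-1)
      have h2 := h t ht x 2
      have key : t ^ 2 * deriv (fun y => T t y) x = 0 := by
        linear_combination (-(1:ℝ)/3) * h2 + h1 + (1/3) * hm1 - h0
      have ht2 : (t:ℝ) ^ 2 ≠ 0 := pow_ne_zero 2 (ne_of_gt ht)
      rcases mul_eq_zero.mp key with h' | h'
      · exact absurd h' ht2
      · exact h'
    -- (cc) deriv (fun u => X u x) t = 0
    have cc : ∀ t > (0:ℝ), ∀ x : ℝ, deriv (fun u => X u x) t = 0 := by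
      intro t ht x
      have h0 := h t ht x 0
      have h1 := h t ht x 1
      have hm1 := h t ht x (-1)
      have h2 := h t ht x 2
      have hb := cb t ht x
      have key : t ^ 2 * deriv (fun u => X u x) t = 0 := by
        linear_combination h1 - (1/6:ℝ) * h2 - (1/3) * hm1 - (1/2) * h0
          + (t ^ 2 * x ^ 6 / 6) * hb
      have ht2 : (t:ℝ) ^ 2 ≠ 0 := pow_ne_zero 2 (ne_of_gt ht)
      rcases mul_eq_zero.mp key with h' | h'
      · exact absurd h' ht2
      · exact h'
    -- (c3) v² coefficient
    have c3 : ∀ t > (0:ℝ), ∀ x : ℝ,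
        t * T t x + t ^ 2 * deriv (fun y => X t y) x
          - t ^ 2 / 2 * deriv (fun u => T u x) t = 0 := by
      intro t ht x
      have h0 := h t ht x 0
      have h1 := h t ht x 1
      have hm1 := h t ht x (-1)
      linear_combination (1/2:ℝ) * h1 + (1/2) * hm1 - h0
    -- (c4) constant coefficient
    have c4 : ∀ t > (0:ℝ), ∀ x : ℝ,
        - (t * x ^ 6 / 3) * T t x - t ^ 2 * x ^ 5 * X t x
          - t ^ 2 * x ^ 6 / 6 * deriv (fun u => T u x) t = 0 := by
      intro t ht x
      have h0 := h t ht x 0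
      linear_combination h0
    -- T is constant in x
    have hTc : ∀ t > (0:ℝ), ∀ x : ℝ, T t x = T t 0 := by
      intro t ht x
      exact is_const_of_deriv_eq_zero (fun y => aux_diffAt_x hT ht)
        (fun y => cb t ht y) x 0
    -- X is constant in t on Ioi 0
    have hXc : ∀ t > (0:ℝ), ∀ x : ℝ, X t x = X 1 x := by
      intro t ht x
      exact aux_const_t (fun u hu => aux_diffAt_t hX hu) (fun u hu => cc u hu x) ht one_pos
    -- partial t-derivatives of T don't depend on x
    have hTa : ∀ t > (0:ℝ), ∀ x : ℝ,
        deriv (fun u => T u x) t = deriv (fun u => T u 0) t := by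
      intro t ht x
      apply Filter.EventuallyEq.deriv_eq
      filter_upwards [Ioi_mem_nhds ht] with u hu
      exact hTc u hu x
    -- x-derivatives of X don't depend on t
    have hXd : ∀ t > (0:ℝ), ∀ x : ℝ,
        deriv (fun y => X t y) x = deriv (fun y => X 1 y) x := by
      intro t ht x
      have : (fun y => X t y) = fun y => X 1 y := funext fun y => hXc t ht y
      rw [this]
    set c : ℝ := deriv (fun y => X 1 y) 0 with hc
    -- x-derivative of X is the constant c
    have hdc : ∀ x : ℝ, deriv (fun y => X 1 y) x = c := by
      intro x
      have e1 := c3 1 one_pos x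
      have e2 := c3 1 one_pos 0
      rw [hTc 1 one_pos x, hTa 1 one_pos x] at e1
      linarith
    -- X 1 is linear: X 1 x = c * x + X 1 0
    have hXlin : ∀ x : ℝ, X 1 x = c * x + X 1 0 := by
      intro x
      have hg : Differentiable ℝ (fun y => X 1 y - c * y) := by
        intro y
        exact (aux_diffAt_x hX one_pos).sub ((differentiableAt_id.const_mul c))
      have hg' : ∀ y : ℝ, deriv (fun y => X 1 y - c * y) y = 0 := by
        intro y
        have hd1 : HasDerivAt (fun y => X 1 y) c y :=
          (aux_diffAt_x hX one_pos).hasDerivAt.congr_deriv (hdc y)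
        have hd2 : HasDerivAt (fun y : ℝ => X 1 y - c * y) (c - c * 1) y :=
          hd1.sub ((hasDerivAt_id y).const_mul c)
        simpa using hd2.deriv
      have := is_const_of_deriv_eq_zero hg hg' x 0
      simp only [mul_zero, sub_zero] at this
      linarith
    -- X 1 0 = 0
    have hb0 : X 1 0 = 0 := by
      have e1 := c4 1 one_pos 1
      have e2 := c4 1 one_pos (-1)
      rw [hTc 1 one_pos 1, hTa 1 one_pos 1] at e1
      rw [hTc 1 one_pos (-1), hTa 1 one_pos (-1)] at e2
      have l1 := hXlin 1
      have l2 := hXlin (-1)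
      norm_num at e1 e2 ⊢
      nlinarith [e1, e2, l1, l2]
    refine ⟨-2 * c, ?_⟩
    intro t ht x
    -- the two equations at (t,0) and (t,1)
    have e3 := c3 t ht 0
    have e4 := c4 t ht 1
    rw [hXd t ht 0, hdc 0] at e3
    rw [hTc t ht 1, hTa t ht 1] at e4
    have hX1 : X t 1 = c := by rw [hXc t ht 1, hXlin 1, hb0]; ring
    rw [hX1] at e4
    have htau : T t 0 = -2 * c * t := by
      have key : t * (T t 0 + 2 * t * c) = 0 := by linear_combination (1/2:ℝ) * e3 - (3/2) * e4
      rcases mul_eq_zero.mp key with h' | h'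
      · exact absurd h' (ne_of_gt ht)
      · linarith
    constructor
    · rw [hTc t ht x, htau]
    · rw [hXc t ht x, hXlin x, hb0]; ring
  · rintro ⟨C₁, hC⟩ t ht x v
    have dTt : deriv (fun u => T u x) t = C₁ := by
      have hev : (fun u => T u x) =ᶠ[nhds t] fun u => C₁ * u := by
        filter_upwards [Ioi_mem_nhds ht] with u hu
        exact (hC u hu x).1
      rw [hev.deriv_eq]
      simpa using ((hasDerivAt_id t).const_mul C₁).deriv
    have dTx : deriv (fun y => T t y) x = 0 := by
      have : (fun y => T t y) = fun _ => C₁ * t := funext fun y => (hC t ht y).1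
      rw [this, deriv_const]
    have dXt : deriv (fun u => X u x) t = 0 := by
      have hev : (fun u => X u x) =ᶠ[nhds t] fun _ => -C₁ * x / 2 := by
        filter_upwards [Ioi_mem_nhds ht] with u hu
        exact (hC u hu x).2
      rw [hev.deriv_eq, deriv_const]
    have dXx : deriv (fun y => X t y) x = -C₁ / 2 := by
      have : (fun y => X t y) = fun y => -C₁ * y / 2 := funext fun y => (hC t ht y).2
      rw [this]
      simpa using (((hasDerivAt_id x).const_mul (-C₁)).div_const 2).deriv
    rw [dTt, dTx, dXt, dXx, (hC t ht x).1, (hC t ht x).2]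
    ring
end

section
/- Let x : (0,∞) → ℝ be twice differentiable and satisfy the Emden–Fowler equation 2t·x'(t) + t²·x''(t) + t²·x(t)⁵ = 0 for all t > 0 (the Euler–Lagrange equation of the Lagrangian L(t,x,v) = (t²/2)(v² − x⁶/3)). Then the function t ↦ t²·(3·x(t)·x'(t) + 3·t·(x'(t))² + t·x(t)⁶) is constant on (0,∞). -/
/-- Conservation law for the Emden–Fowler equation (Example 4):
along solutions of `2t·x' + t²·x'' + t²·x⁵ = 0` on `(0,∞)`, the quantity
`t²·(3·x·x' + 3·t·(x')² + t·x⁶)` is constant. -/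
theorem stmt_14 (x : ℝ → ℝ)
    (hx : ∀ t ∈ Set.Ioi (0:ℝ), DifferentiableAt ℝ x t)
    (hx' : ∀ t ∈ Set.Ioi (0:ℝ), DifferentiableAt ℝ (deriv x) t)
    (hode : ∀ t ∈ Set.Ioi (0:ℝ),
      2 * t * deriv x t + t ^ 2 * deriv (deriv x) t + t ^ 2 * x t ^ 5 = 0) :
    ∃ c : ℝ, ∀ t ∈ Set.Ioi (0:ℝ),
      t ^ 2 * (3 * x t * deriv x t + 3 * t * (deriv x t) ^ 2 + t * x t ^ 6) = c := by
  set F : ℝ → ℝ := fun s =>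
    s ^ 2 * (3 * x s * deriv x s + 3 * s * (deriv x s) ^ 2 + s * x s ^ 6) with hF
  have key : ∀ t ∈ Set.Ioi (0:ℝ), HasDerivAt F 0 t := by
    intro t ht
    have h1 : HasDerivAt x (deriv x t) t := (hx t ht).hasDerivAt
    have h2 : HasDerivAt (deriv x) (deriv (deriv x) t) t := (hx' t ht).hasDerivAt
    have hin := (((h1.const_mul 3).mul h2).add
        (((hasDerivAt_id t).const_mul 3).mul (h2.pow 2))).add
        ((hasDerivAt_id t).mul (h1.pow 6))
    simp only [id_eq] at hin
    have hbig := (hasDerivAt_pow 2 t).mul hin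
    have hode' := hode t ht
    convert hbig using 1
    · rfl
    · rfl
    · rfl
    simp only [Pi.add_apply, Pi.mul_apply, Pi.pow_apply, id_eq]
    push_cast
    linear_combination (-3 * x t - 6 * t * deriv x t) * hode'
  refine ⟨F 1, fun t ht => ?_⟩
  have hdiff : ∀ s ∈ Set.Ioi (0:ℝ), DifferentiableAt ℝ F s :=
    fun s hs => (key s hs).differentiableAt
  have hd0 : ∀ s ∈ Set.Ioi (0:ℝ), ‖deriv F s‖ ≤ 0 := by
    intro s hs
    rw [(key s hs).deriv]
    simp
  have h1 : (1:ℝ) ∈ Set.Ioi (0:ℝ) := by norm_num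
  have := (convex_Ioi (0:ℝ)).norm_image_sub_le_of_norm_deriv_le hdiff hd0 h1 ht
  have : ‖F t - F 1‖ ≤ 0 := by simpa using this
  have : F t = F 1 := by
    have := norm_le_zero_iff.mp this
    linarith [sub_eq_zero.mp this]
  simpa [hF] using this
end

section
/- Consider the Thomas–Fermi Lagrangian L(t,x,v) = v²/2 + (2/5)·x^{5/2}/√t, defined for t > 0 and x > 0. Let T, X : (0,∞) × (0,∞) → ℝ be continuously differentiable and satisfy the variational-symmetry identity (−(1/5)·x^{5/2}·t^{−3/2})·T(t,x) + (x^{3/2}/√t)·X(t,x) + v·(∂X/∂t(t,x) + ∂X/∂x(t,x)·v − v·(∂T/∂t(t,x) + ∂T/∂x(t,x)·v)) + (v²/2 + (2/5)·x^{5/2}/√t)·(∂T/∂t(t,x) + ∂T/∂x(t,x)·v) = 0 for all t > 0, x > 0 and all v ∈ ℝ. Then T(t,x) = 0 and X(t,x) = 0 for all t > 0, x > 0; that is, the Thomas–Fermi variational problem admits no nontrivial variational symmetry. -/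
open Set

lemma sliceDiff2 {F : ℝ → ℝ → ℝ}
    (hF : ContDiffOn ℝ 1 (fun p : ℝ × ℝ => F p.1 p.2) (Set.Ioi 0 ×ˢ Set.Ioi 0))
    {t x : ℝ} (ht : 0 < t) (hx : 0 < x) :
    DifferentiableAt ℝ (fun y => F t y) x := by
  have hopen : IsOpen (Set.Ioi (0:ℝ) ×ˢ Set.Ioi (0:ℝ)) := isOpen_Ioi.prod isOpen_Ioi
  have h1 : ContDiffAt ℝ 1 (fun p : ℝ × ℝ => F p.1 p.2) (t, x) :=
    hF.contDiffAt (hopen.mem_nhds ⟨ht, hx⟩)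
  exact (h1.differentiableAt one_ne_zero).comp x (DifferentiableAt.prodMk (differentiableAt_const t) differentiableAt_id)

lemma sliceDiff1 {F : ℝ → ℝ → ℝ}
    (hF : ContDiffOn ℝ 1 (fun p : ℝ × ℝ => F p.1 p.2) (Set.Ioi 0 ×ˢ Set.Ioi 0))
    {t x : ℝ} (ht : 0 < t) (hx : 0 < x) :
    DifferentiableAt ℝ (fun u => F u x) t := by
  have hopen : IsOpen (Set.Ioi (0:ℝ) ×ˢ Set.Ioi (0:ℝ)) := isOpen_Ioi.prod isOpen_Ioi
  have h1 : ContDiffAt ℝ 1 (fun p : ℝ × ℝ => F p.1 p.2) (t, x) :=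
    hF.contDiffAt (hopen.mem_nhds ⟨ht, hx⟩)
  exact (h1.differentiableAt one_ne_zero).comp t (DifferentiableAt.prodMk differentiableAt_fun_id (differentiableAt_const x) : DifferentiableAt ℝ (fun u : ℝ => (u, x)) t)

lemma constOnIoi {f : ℝ → ℝ}
    (hd : ∀ x ∈ Set.Ioi (0:ℝ), DifferentiableAt ℝ f x)
    (h0 : ∀ x ∈ Set.Ioi (0:ℝ), deriv f x = 0) :
    ∀ a ∈ Set.Ioi (0:ℝ), ∀ b ∈ Set.Ioi (0:ℝ), f a = f b := by
  intro a ha b hb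
  refine (convex_Ioi (0:ℝ)).is_const_of_fderivWithin_eq_zero
    (fun x hx => (hd x hx).differentiableWithinAt) (fun x hx => ?_) ha hb
  rw [fderivWithin_of_isOpen isOpen_Ioi hx]
  have hda : HasDerivAt f 0 x := by
    have := (hd x hx).hasDerivAt
    rwa [h0 x hx] at this
  have := hda.hasFDerivAt.fderiv
  rw [this]; ext; simp

/-- Example 5: the Thomas–Fermi Lagrangian `L(t,x,v) = v²/2 + (2/5)x^{5/2}/√t`
admits no nontrivial variational symmetry. -/
theorem stmt_15 (T X : ℝ → ℝ → ℝ)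
    (hT : ContDiffOn ℝ 1 (fun p : ℝ × ℝ => T p.1 p.2) (Set.Ioi 0 ×ˢ Set.Ioi 0))
    (hX : ContDiffOn ℝ 1 (fun p : ℝ × ℝ => X p.1 p.2) (Set.Ioi 0 ×ˢ Set.Ioi 0))
    (hsym : ∀ t > (0:ℝ), ∀ x > (0:ℝ), ∀ v : ℝ,
        (-(1/5) * x ^ ((5:ℝ)/2) * t ^ (-(3:ℝ)/2)) * T t x
        + (x ^ ((3:ℝ)/2) / Real.sqrt t) * X t x
        + v * (deriv (fun u => X u x) t + deriv (fun y => X t y) x * v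
            - v * (deriv (fun u => T u x) t + deriv (fun y => T t y) x * v))
        + (v ^ 2 / 2 + (2/5) * x ^ ((5:ℝ)/2) / Real.sqrt t)
            * (deriv (fun u => T u x) t + deriv (fun y => T t y) x * v) = 0) :
    ∀ t > (0:ℝ), ∀ x > (0:ℝ), T t x = 0 ∧ X t x = 0 := by
  -- coefficient extraction
  have hTx : ∀ t > (0:ℝ), ∀ x > (0:ℝ), deriv (fun y => T t y) x = 0 := by
    intro t ht x hx
    have h1 := hsym t ht x hx 1
    have hm1 := hsym t ht x hx (-1)
    have h2 := hsym t ht x hx 2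
    have hm2 := hsym t ht x hx (-2)
    linear_combination (-1/6) * h2 + (1/3) * h1 + (-1/3) * hm1 + (1/6) * hm2
  have hC : ∀ t > (0:ℝ), ∀ x > (0:ℝ),
      deriv (fun y => X t y) x = deriv (fun u => T u x) t / 2 := by
    intro t ht x hx
    have h0 := hsym t ht x hx 0
    have h1 := hsym t ht x hx 1
    have hm1 := hsym t ht x hx (-1)
    linear_combination (1/2) * h1 + (1/2) * hm1 - h0
  have hXt : ∀ t > (0:ℝ), ∀ x > (0:ℝ), deriv (fun u => X u x) t = 0 := by
    intro t ht x hx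
    have h1 := hsym t ht x hx 1
    have hm1 := hsym t ht x hx (-1)
    have h2 := hsym t ht x hx 2
    have hm2 := hsym t ht x hx (-2)
    have htx := hTx t ht x hx
    linear_combination (2/3) * h1 + (-2/3) * hm1 + (-1/12) * h2 + (1/12) * hm2
      - ((2/5) * x ^ ((5:ℝ)/2) / Real.sqrt t) * htx
  have hD : ∀ t > (0:ℝ), ∀ x > (0:ℝ),
      (-(1/5) * x ^ ((5:ℝ)/2) * t ^ (-(3:ℝ)/2)) * T t x
        + (x ^ ((3:ℝ)/2) / Real.sqrt t) * X t x
        + ((2/5) * x ^ ((5:ℝ)/2) / Real.sqrt t) * deriv (fun u => T u x) t = 0 := by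
    intro t ht x hx
    have h0 := hsym t ht x hx 0
    linear_combination h0
  -- T is independent of x, X independent of t
  have hTconst : ∀ t > (0:ℝ), ∀ a > (0:ℝ), ∀ b > (0:ℝ), T t a = T t b := by
    intro t ht a ha b hb
    exact constOnIoi (fun y hy => sliceDiff2 hT ht hy) (fun y hy => hTx t ht y hy) a ha b hb
  have hXconst : ∀ x > (0:ℝ), ∀ a > (0:ℝ), ∀ b > (0:ℝ), X a x = X b x := by
    intro x hx a ha b hb
    exact constOnIoi (fun u hu => sliceDiff1 hX hu hx) (fun u hu => hXt u hu x hx) a ha b hb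
  -- partial derivatives are independent of the other variable
  have hTtInd : ∀ t > (0:ℝ), ∀ a > (0:ℝ), ∀ b > (0:ℝ),
      deriv (fun u => T u a) t = deriv (fun u => T u b) t := by
    intro t ht a ha b hb
    apply Filter.EventuallyEq.deriv_eq
    filter_upwards [isOpen_Ioi.mem_nhds ht] with u hu
    exact hTconst u hu a ha b hb
  have hXxInd : ∀ x > (0:ℝ), ∀ a > (0:ℝ), ∀ b > (0:ℝ),
      deriv (fun y => X a y) x = deriv (fun y => X b y) x := by
    intro x hx a ha b hb
    apply Filter.EventuallyEq.deriv_eq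
    filter_upwards [isOpen_Ioi.mem_nhds hx] with y hy
    exact hXconst y hy a ha b hb
  set k : ℝ := deriv (fun u => T u 1) 1 with hk
  have one_mem : (1:ℝ) ∈ Set.Ioi (0:ℝ) := by norm_num
  -- ∂T/∂t is the constant k
  have hTt : ∀ t > (0:ℝ), ∀ x > (0:ℝ), deriv (fun u => T u x) t = k := by
    intro t ht x hx
    have e1 : deriv (fun u => T u x) t = deriv (fun u => T u 1) t := hTtInd t ht x hx 1 one_mem
    have e2 : deriv (fun u => T u 1) t = 2 * deriv (fun y => X t y) 1 := by
      have := hC t ht 1 one_mem; linarith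
    have e3 : deriv (fun y => X t y) 1 = deriv (fun y => X 1 y) 1 := hXxInd 1 one_mem t ht 1 one_mem
    have e4 : deriv (fun y => X 1 y) 1 = deriv (fun u => T u 1) 1 / 2 := hC 1 one_mem 1 one_mem
    rw [e1, e2, e3, e4]; ring
  -- linearity of T in t (at x = 1)
  have hTlin : ∀ t > (0:ℝ), T t 1 = T 1 1 + k * (t - 1) := by
    intro t ht
    have hconst := constOnIoi (f := fun u => T u 1 - k * u)
      (fun u hu => ((sliceDiff1 hT hu one_mem).sub ((differentiableAt_fun_id).const_mul k)))
      (fun u hu => by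
        have hd : HasDerivAt (fun u => T u 1 - k * u) (deriv (fun u => T u 1) u - k) u := by
          have h1 := (sliceDiff1 hT hu one_mem).hasDerivAt
          have h2 : HasDerivAt (fun u : ℝ => k * u) k u := by
            simpa using (hasDerivAt_id u).const_mul k
          exact h1.sub h2
        rw [hd.deriv, hTt u hu 1 one_mem, sub_self])
      t ht 1 one_mem
    linarith [hconst]
  -- linearity of X in x (at t = 1)
  have hXlin : ∀ x > (0:ℝ), X 1 x = X 1 1 + (k/2) * (x - 1) := by
    intro x hx
    have hconst := constOnIoi (f := fun y => X 1 y - (k/2) * y)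
      (fun y hy => ((sliceDiff2 hX one_mem hy).sub ((differentiableAt_fun_id).const_mul (k/2))))
      (fun y hy => by
        have hd : HasDerivAt (fun y => X 1 y - (k/2) * y) (deriv (fun y => X 1 y) y - k/2) y := by
          have h1 := (sliceDiff2 hX one_mem hy).hasDerivAt
          have h2 : HasDerivAt (fun y : ℝ => (k/2) * y) (k/2) y := by
            simpa using (hasDerivAt_id y).const_mul (k/2)
          have := h1.sub h2
          exact this
        rw [hd.deriv]
        rw [hC 1 one_mem y hy, hTt 1 one_mem y hy]; ring)
      x hx 1 one_mem
    linarith [hconst]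
  -- numeric rpow facts
  set r : ℝ := Real.sqrt 2 with hr
  have hrpos : (0:ℝ) < r := Real.sqrt_pos.mpr (by norm_num)
  have hr0 : r ≠ 0 := ne_of_gt hrpos
  have hrhalf : (2:ℝ) ^ ((1:ℝ)/2) = r := by
    rw [hr, Real.sqrt_eq_rpow]
  have h22 : (2:ℝ) ^ ((2:ℝ)) = 4 := by
    rw [show ((2:ℝ):ℝ) = ((2:ℕ):ℝ) by norm_num, Real.rpow_natCast]; norm_num
  have h52 : (2:ℝ) ^ ((5:ℝ)/2) = 4 * r := by
    rw [show (5:ℝ)/2 = 2 + 1/2 by norm_num, Real.rpow_add (by norm_num : (0:ℝ) < 2),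
      h22, hrhalf]
  have h32 : (2:ℝ) ^ ((3:ℝ)/2) = 2 * r := by
    rw [show (3:ℝ)/2 = 1 + 1/2 by norm_num, Real.rpow_add (by norm_num : (0:ℝ) < 2),
      Real.rpow_one, hrhalf]
  have hm32 : (2:ℝ) ^ (-(3:ℝ)/2) = (2 * r)⁻¹ := by
    rw [show -(3:ℝ)/2 = -((3:ℝ)/2) by norm_num, Real.rpow_neg (by norm_num : (0:ℝ) ≤ 2), h32]
  have two_mem : (2:ℝ) ∈ Set.Ioi (0:ℝ) := by norm_num
  -- the three key equations
  have e1 : -(1/5) * T 1 1 + X 1 1 + (2/5) * k = 0 := by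
    have E1 := hD 1 one_mem 1 one_mem
    rw [hTt 1 one_mem 1 one_mem, Real.one_rpow, Real.one_rpow, Real.one_rpow,
      Real.sqrt_one] at E1
    linear_combination E1
  have e2 : -(4/5) * T 1 1 + 2 * X 1 1 + (13/5) * k = 0 := by
    have E2 := hD 1 one_mem 2 two_mem
    rw [hTt 1 one_mem 2 two_mem, hTconst 1 one_mem 2 two_mem 1 one_mem,
      hXlin 2 two_mem, Real.one_rpow, Real.sqrt_one, h52, h32] at E2
    have e2' : r * (-(4/5) * T 1 1 + 2 * X 1 1 + (13/5) * k) = 0 := by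
      linear_combination E2
    rcases mul_eq_zero.mp e2' with h | h
    · exact absurd h hr0
    · exact h
  have hrr : r * r = 2 := Real.mul_self_sqrt (by norm_num)
  have e3 : -(1/10) * (T 1 1 + k) + X 1 1 + (2/5) * k = 0 := by
    have E3 := hD 2 two_mem 1 one_mem
    rw [hTt 2 two_mem 1 one_mem, hTlin 2 two_mem,
      hXconst 1 one_mem 2 two_mem 1 one_mem, Real.one_rpow, Real.one_rpow, hm32, ← hr] at E3
    have e3' : (r * r) * ((-(1/10) * (T 1 1 + k) + X 1 1 + (2/5) * k) * 2) = 0 := by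
      field_simp at E3
      linear_combination (r * r / 5) * E3
    rw [hrr] at e3'
    linarith
  have hk0 : k = 0 := by linarith
  have hT110 : T 1 1 = 0 := by linarith
  have hX110 : X 1 1 = 0 := by linarith
  -- conclusion
  intro t ht x hx
  constructor
  · rw [hTconst t ht x hx 1 one_mem, hTlin t ht, hT110, hk0]; ring
  · rw [hXconst x hx t ht 1 one_mem, hXlin x hx, hX110, hk0]; ring
end

section
/- Fix real constants m > 0, k and a, and let x : ℝ → ℝ be twice differentiable and satisfy the equation of motion of the damped harmonic oscillator, m·x''(t) + a·x'(t) + k·x(t) = 0 for all t ∈ ℝ (the Euler–Lagrange equation of the Lagrangian L(t,x,v) = (1/2)·(m·v² − k·x²)·e^{a·t/m}). Then the function t ↦ e^{a·t/m}·(a·x(t)·x'(t) + m·(x'(t))² + k·x(t)²) is constant on ℝ. -/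
/-- First integral of the damped harmonic oscillator (Example 6):
along solutions of `m·x'' + a·x' + k·x = 0`, the quantity
`e^{at/m}·(a·x·x' + m·(x')² + k·x²)` is constant. -/
theorem stmt_16 (m k a : ℝ) (hm : 0 < m) (x : ℝ → ℝ)
    (hx : Differentiable ℝ x) (hx' : Differentiable ℝ (deriv x))
    (hode : ∀ t : ℝ, m * deriv (deriv x) t + a * deriv x t + k * x t = 0) :
    ∃ c : ℝ, ∀ t : ℝ,
      Real.exp (a * t / m) *
        (a * x t * deriv x t + m * (deriv x t) ^ 2 + k * x t ^ 2) = c := by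
  set F : ℝ → ℝ := fun t => Real.exp (a * t / m) *
      (a * x t * deriv x t + m * (deriv x t) ^ 2 + k * x t ^ 2) with hF
  have hder : ∀ t : ℝ, HasDerivAt F 0 t := by
    intro t
    have hxd : HasDerivAt x (deriv x t) t := (hx t).hasDerivAt
    have hxd' : HasDerivAt (deriv x) (deriv (deriv x) t) t := (hx' t).hasDerivAt
    have hexp : HasDerivAt (fun t => Real.exp (a * t / m))
        (Real.exp (a * t / m) * (a / m)) t := by
      have h1 : HasDerivAt (fun t : ℝ => a * t / m) (a / m) t := by
        simpa [mul_div_assoc] using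
          ((hasDerivAt_id t).const_mul a).div_const m
      exact (Real.hasDerivAt_exp (a * t / m)).comp t h1
    have hinner : HasDerivAt
        (fun t => a * x t * deriv x t + m * (deriv x t) ^ 2 + k * x t ^ 2)
        (a * (deriv x t * deriv x t + x t * deriv (deriv x) t)
          + m * (2 * deriv x t * deriv (deriv x) t)
          + k * (2 * x t * deriv x t)) t := by
      have h1 : HasDerivAt (fun t => a * x t * deriv x t)
          (a * (deriv x t * deriv x t + x t * deriv (deriv x) t)) t := by
        have := ((hxd.const_mul a).mul hxd')
        refine this.congr_deriv ?_
        ring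
      have h2 : HasDerivAt (fun t => m * (deriv x t) ^ 2)
          (m * (2 * deriv x t * deriv (deriv x) t)) t := by
        have := (hxd'.pow 2).const_mul m
        refine this.congr_deriv ?_
        ring
      have h3 : HasDerivAt (fun t => k * x t ^ 2)
          (k * (2 * x t * deriv x t)) t := by
        have := (hxd.pow 2).const_mul k
        refine this.congr_deriv ?_
        ring
      exact (h1.add h2).add h3
    have := hexp.mul hinner
    refine this.congr_deriv ?_
    have hode' := hode t
    have hxx : deriv (deriv x) t = -(a * deriv x t + k * x t) / m := by
      field_simp
      linarith
    rw [hxx]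
    field_simp
    ring
  refine ⟨F 0, fun t => ?_⟩
  have : F = fun _ => F 0 := by
    funext s
    have := is_const_of_deriv_eq_zero (f := F)
      (fun u => (hder u).differentiableAt) (fun u => (hder u).deriv) s 0
    exact this
  exact congrFun this t ▸ rfl
end
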